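/- arXiv:2502.17384 — 5 statements merged into one kernel-verified Lean document; each statement's English description precedes it below -/
import Mathlib

section
/- (Per-coordinate fingerprinting with scaling.) Fix n ∈ ℕ, β > 0 and γ ∈ (0,1]. Let f: {±1}^n → ℝ be an arbitrary function and let π = Beta_{[−γ,γ]}(β,β). For p ∈ [−1,1], write X ∼ p^{⊗n} for n i.i.d. ±1-valued random variables with mean p. Then E_{p∼π} E_{X∼p^{⊗n}}[ ((1 − (p/γ)²)/(1 − p²)) · f(X) · Σ_{i=1}^n (X_i − p) ] = (2β/γ²) · E_{p∼π}[ p · E_{X∼p^{⊗n}}[f(X)] ]. -/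
open MeasureTheory ProbabilityTheory

noncomputable section

namespace Trace

/-- The `ℓ_p` norm on `Fin d → ℝ` (for a real exponent `p`). -/
def lpNorm {d : ℕ} (p : ℝ) (x : Fin d → ℝ) : ℝ :=
  (∑ i, |x i| ^ p) ^ (1 / p)

/-- The `ℓ_∞` norm on `Fin d → ℝ`. -/
def linftyNorm {d : ℕ} (x : Fin d → ℝ) : ℝ := ⨆ i, |x i|

/-- A stochastic convex optimization (SCO) problem in dimension `d`:
a data space `Z`, a convex parameter domain `dom ⊆ ℝ^d` and a loss which is
convex in the parameter for every data point. -/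
structure SCOProblem (d : ℕ) where
  Z : Type
  mZ : MeasurableSpace Z
  dom : Set (Fin d → ℝ)
  loss : Z → (Fin d → ℝ) → ℝ
  convex_dom : Convex ℝ dom
  convexOn_loss : ∀ z, ConvexOn ℝ dom (loss z)

attribute [instance] SCOProblem.mZ

/-- `ℓ_p`-Lipschitz-bounded SCO problems: the domain sits inside the unit `ℓ_p`
ball and the loss is `1`-Lipschitz w.r.t. the `ℓ_p` norm. -/
def SCOProblem.IsLipschitzBounded {d : ℕ} (p : ℝ) (P : SCOProblem d) : Prop :=
  (∀ θ ∈ P.dom, lpNorm p θ ≤ 1) ∧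
  ∀ z : P.Z, ∀ θ₁ ∈ P.dom, ∀ θ₂ ∈ P.dom,
    |P.loss z θ₁ - P.loss z θ₂| ≤ lpNorm p (θ₁ - θ₂)

/-- Population risk. -/
def SCOProblem.risk {d : ℕ} (P : SCOProblem d) (D : Measure P.Z) (θ : Fin d → ℝ) : ℝ :=
  ∫ z, P.loss z θ ∂D

/-- Joint law of `(S_n, θ̂)` where `S_n ∼ D^{⊗n}` and `θ̂ ∼ K(S_n)`. -/
def jointMeasure {Z : Type*} [MeasurableSpace Z] {d n : ℕ}
    (D : Measure Z) (K : Kernel (Fin n → Z) (Fin d → ℝ)) :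
    Measure ((Fin n → Z) × (Fin d → ℝ)) :=
  (Measure.pi fun _ : Fin n => D).bind fun s => (K s).map fun θ => (s, θ)

/-- `A_n` is an `α`-learner: it is a Markov kernel, it outputs points of the domain,
and for every data distribution its expected excess risk is at most `α`. -/
def IsAlphaLearner {d n : ℕ} (P : SCOProblem d)
    (K : Kernel (Fin n → P.Z) (Fin d → ℝ)) (α : ℝ) : Prop :=
  IsMarkovKernel K ∧
  (∀ s, ∀ᵐ θ ∂(K s), θ ∈ P.dom) ∧
  ∀ D : Measure P.Z, IsProbabilityMeasure D →
    (∫ x, P.risk D x.2 ∂jointMeasure D K) - (⨅ θ : P.dom, P.risk D θ.1) ≤ α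

/-- Joint law of `(Z_0, Z_1, …, Z_n, θ̂)` where the `Z_i` are i.i.d. from `D` and
`θ̂ ∼ K(Z_1, …, Z_n)` (coordinate `0` is the fresh point). -/
def traceMeasure {Z : Type*} [MeasurableSpace Z] {d n : ℕ}
    (D : Measure Z) (K : Kernel (Fin n → Z) (Fin d → ℝ)) :
    Measure ((Fin (n + 1) → Z) × (Fin d → ℝ)) :=
  (Measure.pi fun _ : Fin (n + 1) => D).bind
    fun zs => (K fun i : Fin n => zs i.succ).map fun θ => (zs, θ)

/-- `(ξ, m)`-traceability of a learning algorithm `K`. -/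
def IsTraceable {Z : Type*} [MeasurableSpace Z] {d n : ℕ}
    (K : Kernel (Fin n → Z) (Fin d → ℝ)) (ξ m : ℝ) : Prop :=
  ∃ (φ : (Fin d → ℝ) → Z → ℝ) (D : Measure Z) (lam : ℝ),
    IsProbabilityMeasure D ∧ Measurable (Function.uncurry φ) ∧
    (traceMeasure D K {x | lam ≤ φ x.2 (x.1 0)}).toReal ≤ ξ ∧
    m ≤ ∫ x, ((Finset.univ.filter fun i : Fin n => lam ≤ φ x.2 (x.1 i.succ)).card : ℝ)
          ∂traceMeasure D K

/-- The subgaussian norm `‖X‖_{ψ₂}` of a real random variable. -/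
def subgNorm {Ω : Type*} [MeasurableSpace Ω] (μ : Measure Ω) (X : Ω → ℝ) : ℝ :=
  sInf {t : ℝ | 0 < t ∧ ∫ ω, Real.exp (X ω ^ 2 / t ^ 2) ∂μ ≤ 2}

/-- Diameter of a set `T` with respect to a norm-like function `N`. -/
def normDiam {d : ℕ} (N : (Fin d → ℝ) → ℝ) (T : Set (Fin d → ℝ)) : ℝ :=
  ⨆ x : T, ⨆ y : T, N (x.1 - y.1)

/-- A `σ`-subgaussian process indexed by `T` with respect to the norm `N`. -/
def IsSubgaussianProcess {Ω : Type*} [MeasurableSpace Ω] {d : ℕ} (μ : Measure Ω) (T : Set (Fin d → ℝ))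
    (N : (Fin d → ℝ) → ℝ) (X : (Fin d → ℝ) → Ω → ℝ) (σ : ℝ) : Prop :=
  (∀ θ ∈ T, ∀ θ' ∈ T, subgNorm μ (fun ω => X θ ω - X θ' ω) ≤ σ * N (θ - θ')) ∧
  ∀ θ ∈ T, subgNorm μ (X θ) ≤ σ * normDiam N T

/-- The Minkowski norm (gauge) of the convex hull of `T ∪ (−T)`. -/
def minkowskiNorm {d : ℕ} (T : Set (Fin d → ℝ)) : (Fin d → ℝ) → ℝ :=
  gauge (convexHull ℝ (T ∪ (fun x => -x) '' T))

/-- A subgaussian tracer at scale `κ` for domain `T`: the scores form a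
`1`-subgaussian process w.r.t. the Minkowski norm of `T`, and are bounded by `κ`. -/
def IsSubgTracer {Z : Type*} [MeasurableSpace Z] {d : ℕ} (T : Set (Fin d → ℝ)) (κ : ℝ)
    (φ : (Fin d → ℝ) → Z → ℝ) (D : Measure Z) : Prop :=
  IsProbabilityMeasure D ∧ Measurable (Function.uncurry φ) ∧
  IsSubgaussianProcess D T (minkowskiNorm T) φ 1 ∧
  ∀ θ ∈ T, ∀ z, |φ θ z| ≤ κ

/-- The subgaussian trace value `Tr_κ(P; n, α)`. -/
def traceValue {d : ℕ} (P : SCOProblem d) (κ : ℝ) (n : ℕ) (α : ℝ) : ℝ :=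
  ⨅ K : {K : Kernel (Fin n → P.Z) (Fin d → ℝ) // IsAlphaLearner P K α},
    ⨆ t : {t : ((Fin d → ℝ) → P.Z → ℝ) × Measure P.Z // IsSubgTracer P.dom κ t.1 t.2},
      ∫ x, (n : ℝ)⁻¹ * ∑ i, t.1.1 x.2 (x.1 i) ∂jointMeasure t.1.2 K.1

/-- `(ε, δ)`-differential privacy of a learning algorithm. -/
def IsDP {Z : Type*} [MeasurableSpace Z] {d n : ℕ}
    (K : Kernel (Fin n → Z) (Fin d → ℝ)) (ε δ : ℝ) : Prop :=
  ∀ s s' : Fin n → Z, (∃ j, ∀ i, i ≠ j → s i = s' i) →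
    ∀ M : Set (Fin d → ℝ), MeasurableSet M →
      (K s M).toReal ≤ Real.exp ε * (K s' M).toReal + δ

/-- Support of a vector, as a finset of coordinates. -/
def sparseSupport {d : ℕ} (z : Fin d → ℝ) : Finset (Fin d) :=
  Finset.univ.filter fun i => z i ≠ 0

/-- `Z_k`: sign vectors with exactly `k` nonzero coordinates. -/
def SparseZ (d k : ℕ) : Set (Fin d → ℝ) :=
  {z | (∀ i, z i = 0 ∨ z i = 1 ∨ z i = -1) ∧ (sparseSupport z).card = k}

lemma convex_linftyBall {d : ℕ} (r : ℝ) :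
    Convex ℝ {θ : Fin d → ℝ | ∀ i, |θ i| ≤ r} := by
  intro x hx y hy a b ha hb hab
  intro i
  have h0 : (a • x + b • y) i = a * x i + b * y i := rfl
  have h1 : |a * x i + b * y i| ≤ a * |x i| + b * |y i| := by
    calc |a * x i + b * y i| ≤ |a * x i| + |b * y i| := abs_add_le _ _
      _ = a * |x i| + b * |y i| := by
          rw [abs_mul, abs_mul, abs_of_nonneg ha, abs_of_nonneg hb]
  have h2 : a * |x i| + b * |y i| ≤ a * r + b * r := by
    have hx' := hx i
    have hy' := hy i
    gcongr
  have h3 : a * r + b * r = r := by rw [← add_mul, hab, one_mul]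
  rw [h0]
  linarith

lemma convexOn_negInner {d : ℕ} {S : Set (Fin d → ℝ)} (hS : Convex ℝ S)
    (c : ℝ) (v : Fin d → ℝ) :
    ConvexOn ℝ S fun θ => -(c * ∑ i, θ i * v i) := by
  refine ⟨hS, fun x _ y _ a b ha hb hab => le_of_eq ?_⟩
  have h : ∑ i, (a • x + b • y) i * v i
      = a * ∑ i, x i * v i + b * ∑ i, y i * v i := by
    rw [Finset.mul_sum, Finset.mul_sum, ← Finset.sum_add_distrib]
    refine Finset.sum_congr rfl fun i _ => ?_
    simp only [Pi.add_apply, Pi.smul_apply, smul_eq_mul]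
    ring
  simp only [smul_eq_mul]
  rw [h]
  ring

/-- The hard problem `P_{k,p}`: `Θ` the `ℓ_∞` ball of radius `d^{-1/p}`, data space
`Z_k`, and loss `f(θ, z) = -k^{1/p - 1}⟨θ, z⟩` (note `k^{-1/q} = k^{1/p-1}`). -/
def hardProblem (d k : ℕ) (p : ℝ) : SCOProblem d where
  Z := ↥(SparseZ d k)
  mZ := inferInstance
  dom := {θ | ∀ i, |θ i| ≤ (d : ℝ) ^ (-(1 : ℝ) / p)}
  loss := fun z θ => -((k : ℝ) ^ ((1 : ℝ) / p - 1) * ∑ i, θ i * z.1 i)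
  convex_dom := convex_linftyBall _
  convexOn_loss := fun z => convexOn_negInner (convex_linftyBall _) _ _

/-- The sparse distribution `D_{μ,k}` on `Z_k` with mean `μ`. -/
def sparseDist (d k : ℕ) (μ : Fin d → ℝ) : Measure ↥(SparseZ d k) :=
  Measure.sum fun z : ↥(SparseZ d k) =>
    (ENNReal.ofReal ((d.choose k : ℝ)⁻¹ *
        ∏ j ∈ sparseSupport z.1, (1 + (d : ℝ) / k * μ j * z.1 j) / 2)) •
      Measure.dirac z

/-- The fingerprinting score `φ_μ(θ, z) = ∑_{j ∈ supp z} θ^j (z^j − (d/k) μ^j)`. -/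
def sparsePhi (d k : ℕ) (μ θ : Fin d → ℝ) (z : ↥(SparseZ d k)) : ℝ :=
  ∑ j ∈ sparseSupport z.1, θ j * (z.1 j - (d : ℝ) / k * μ j)

/-- The `{±1}`-valued distribution with mean `m` (on `Bool`; `true ↦ 1`, `false ↦ -1`). -/
def signMeasure (m : ℝ) : Measure Bool :=
  ENNReal.ofReal ((1 + m) / 2) • Measure.dirac true +
    ENNReal.ofReal ((1 - m) / 2) • Measure.dirac false

/-- Embedding of boolean vectors as `{±1}`-vectors. -/
def signVec {n : ℕ} (z : Fin n → Bool) : Fin n → ℝ := fun i => if z i then 1 else -1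

/-- Normalizing constant `B(β) = 2^{2β−1} Γ(β)² / Γ(2β)` of the symmetric beta
distribution. -/
def betaNormConst (β : ℝ) : ℝ :=
  2 ^ (2 * β - 1) * Real.Gamma β ^ 2 / Real.Gamma (2 * β)

/-- The symmetric beta distribution on `[−γ, γ]` with parameter `β`, i.e. with
density `x ↦ (1 − (x/γ)²)^{β−1} / (γ B(β))` on `[−γ, γ]`. -/
def symmBeta (β γ : ℝ) : Measure ℝ :=
  (ENNReal.ofReal (γ * betaNormConst β))⁻¹ •
    ((volume.restrict (Set.Icc (-γ) γ)).withDensity fun x =>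
      ENNReal.ofReal ((1 - (x / γ) ^ 2) ^ (β - 1)))

end Trace

open MeasureTheory Set

namespace FPAux

noncomputable section

def sg (b : Bool) : ℝ := if b then 1 else -1
def wgt (p : ℝ) (b : Bool) : ℝ := if b then (1 + p) / 2 else (1 - p) / 2

lemma wgt_nonneg {p : ℝ} (hp : p ∈ Icc (-1 : ℝ) 1) (b : Bool) : 0 ≤ wgt p b := by
  obtain ⟨h1, h2⟩ := hp; cases b <;> simp only [wgt, Bool.false_eq_true, if_true, if_false] <;> linarith

lemma continuous_wgt (b : Bool) : Continuous fun p => wgt p b := by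
  cases b <;> simp only [wgt, Bool.false_eq_true, if_true, if_false] <;> fun_prop

lemma hasDerivAt_wgt (p : ℝ) (b : Bool) : HasDerivAt (fun p => wgt p b) (sg b / 2) p := by
  cases b
  · simpa [sg, wgt] using ((hasDerivAt_id p).const_sub 1).div_const 2
  · simpa [sg, wgt] using ((hasDerivAt_id p).const_add 1).div_const 2

lemma wgt_key (p : ℝ) (b : Bool) : wgt p b * (sg b - p) = (1 - p ^ 2) * (sg b / 2) := by
  cases b <;> simp only [wgt, sg, Bool.false_eq_true, if_true, if_false] <;> ring

variable {n : ℕ}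

def W (p : ℝ) (X : Fin n → Bool) : ℝ := ∏ i, wgt p (X i)

def DW (p : ℝ) (X : Fin n → Bool) : ℝ :=
  ∑ i, (∏ j ∈ Finset.univ.erase i, wgt p (X j)) * (sg (X i) / 2)

lemma continuous_W (X : Fin n → Bool) : Continuous fun p => W p X :=
  continuous_finset_prod _ fun i _ => continuous_wgt (X i)

lemma continuous_DW (X : Fin n → Bool) : Continuous fun p => DW p X :=
  continuous_finset_sum _ fun i _ =>
    (continuous_finset_prod _ fun j _ => continuous_wgt (X j)).mul continuous_const

lemma hasDerivAt_W (p : ℝ) (X : Fin n → Bool) : HasDerivAt (fun p => W p X) (DW p X) p := by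
  simpa [W, DW, smul_eq_mul] using
    HasDerivAt.fun_finsetProd (u := Finset.univ) (f := fun i p => wgt p (X i))
      (f' := fun i => sg (X i) / 2) (fun i _ => hasDerivAt_wgt p (X i))

lemma W_key (p : ℝ) (X : Fin n → Bool) :
    W p X * (∑ i, (sg (X i) - p)) = (1 - p ^ 2) * DW p X := by
  rw [Finset.mul_sum, DW, Finset.mul_sum]
  refine Finset.sum_congr rfl fun i _ => ?_
  have h1 : W p X = wgt p (X i) * ∏ j ∈ Finset.univ.erase i, wgt p (X j) :=
    (Finset.mul_prod_erase _ _ (Finset.mem_univ i)).symm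
  have h2 := wgt_key p (X i)
  rw [h1]
  linear_combination (∏ j ∈ Finset.univ.erase i, wgt p (X j)) * h2

open Trace in
lemma signMeasure_singleton (p : ℝ) (b : Bool) :
    Trace.signMeasure p {b} = ENNReal.ofReal (wgt p b) := by
  cases b <;>
    simp [Trace.signMeasure, wgt, Measure.dirac_apply', Set.indicator]

open Trace in
lemma isProb_signMeasure {p : ℝ} (hp : p ∈ Icc (-1 : ℝ) 1) :
    IsProbabilityMeasure (Trace.signMeasure p) := by
  obtain ⟨h1, h2⟩ := hp
  constructor
  have huniv : (Set.univ : Set Bool) = {true} ∪ {false} := by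
    ext b; cases b <;> simp
  rw [huniv, measure_union (by simp) (measurableSet_singleton _),
    signMeasure_singleton, signMeasure_singleton,
    ← ENNReal.ofReal_add (by simp [wgt]; linarith) (by simp [wgt]; linarith)]
  norm_num [wgt]
  ring

lemma integral_pi_sign {p : ℝ} (hp : p ∈ Icc (-1 : ℝ) 1) (φ : (Fin n → Bool) → ℝ) :
    ∫ X, φ X ∂(Measure.pi fun _ : Fin n => Trace.signMeasure p)
      = ∑ X, W p X * φ X := by
  haveI : ∀ i : Fin n, IsProbabilityMeasure ((fun _ : Fin n => Trace.signMeasure p) i) :=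
    fun _ => isProb_signMeasure hp
  rw [integral_fintype (Integrable.of_finite)]
  refine Finset.sum_congr rfl fun X _ => ?_
  have hsing : ({X} : Set (Fin n → Bool)) = Set.univ.pi fun i => {X i} :=
    (Set.univ_pi_singleton X).symm
  rw [Measure.real, hsing, Measure.pi_pi]
  simp_rw [signMeasure_singleton]
  rw [ENNReal.toReal_prod]
  simp_rw [ENNReal.toReal_ofReal (wgt_nonneg hp _)]
  rw [smul_eq_mul, W]

lemma rho_intervalIntegrable {β γ : ℝ} (hβ : 0 < β) (hγ : 0 < γ) :
    IntervalIntegrable (fun p => (1 - (p / γ) ^ 2) ^ (β - 1)) volume (-γ) γ := by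
  have hrm : Measurable fun x : ℝ => x ^ (β - 1) := by
    apply measurable_of_continuousOn_compl_singleton (0 : ℝ)
    exact continuousOn_of_forall_continuousAt fun x hx =>
      Real.continuousAt_rpow_const x (β - 1) (Or.inl hx)
  have hmeas : Measurable fun p : ℝ => (1 - (p / γ) ^ 2) ^ (β - 1) :=
    hrm.comp (measurable_const.sub ((measurable_id.div_const γ).pow_const 2))
  have half : IntervalIntegrable (fun p => (1 - (p / γ) ^ 2) ^ (β - 1)) volume 0 γ := by
    rcases le_or_gt 1 β with hb | hb
    · apply ContinuousOn.intervalIntegrable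
      exact ContinuousOn.rpow_const (by fun_prop) fun x _ => Or.inr (by linarith)
    · have J1 : IntervalIntegrable (fun x : ℝ => x ^ (β - 1)) volume 0 γ :=
        intervalIntegral.intervalIntegrable_rpow' (by linarith)
      have J2 : IntervalIntegrable (fun x : ℝ => (γ - x) ^ (β - 1)) volume 0 γ := by
        simpa using (J1.comp_sub_left γ).symm
      have J3 : IntervalIntegrable (fun x : ℝ => γ ^ (1 - β) * (γ - x) ^ (β - 1)) volume 0 γ :=
        J2.const_mul _
      apply J3.mono_fun hmeas.aestronglyMeasurable
      filter_upwards [ae_restrict_mem measurableSet_uIoc] with x hx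
      rw [Set.uIoc_of_le hγ.le] at hx
      obtain ⟨hx0, hxγ⟩ := hx
      rcases eq_or_lt_of_le hxγ with rfl | hxlt
      · have : (1 : ℝ) - (x / x) ^ 2 = 0 := by
          rw [div_self (by linarith)]; ring
        rw [this, Real.zero_rpow (by intro h; exact absurd (by linarith : β = 0) hβ.ne'),
          sub_self, Real.zero_rpow (by intro h; exact absurd (by linarith : β = 0) hβ.ne')]
        simp
      · have hb1 : (0 : ℝ) < γ - x := by linarith
        have hb2 : (0 : ℝ) < (γ + x) / γ ^ 2 := by positivity
        have e1 : 1 - (x / γ) ^ 2 = (γ - x) * ((γ + x) / γ ^ 2) := by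
          field_simp; ring
        have hρnn : 0 ≤ (1 - (x / γ) ^ 2) ^ (β - 1) :=
          Real.rpow_nonneg (by rw [e1]; positivity) _
        rw [Real.norm_of_nonneg hρnn, Real.norm_of_nonneg
            (by positivity : (0:ℝ) ≤ γ ^ (1 - β) * (γ - x) ^ (β - 1))]
        rw [e1, Real.mul_rpow hb1.le hb2.le]
        rw [mul_comm (γ ^ (1 - β))]
        refine mul_le_mul_of_nonneg_left ?_ (Real.rpow_nonneg hb1.le _)
        have hle : γ⁻¹ ≤ (γ + x) / γ ^ 2 := by
          rw [inv_eq_one_div, div_le_div_iff₀ hγ (by positivity)]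
          nlinarith
        calc ((γ + x) / γ ^ 2) ^ (β - 1) ≤ (γ⁻¹) ^ (β - 1) :=
              Real.rpow_le_rpow_of_nonpos (by positivity) hle (by linarith)
          _ = γ ^ (1 - β) := by
              rw [Real.inv_rpow hγ.le, ← Real.rpow_neg hγ.le]
              congr 1; ring
  have hneg : IntervalIntegrable (fun p => (1 - (p / γ) ^ 2) ^ (β - 1)) volume (-γ) 0 := by
    have h2 := (IntervalIntegrable.iff_comp_neg (by simp)).mp half
    have : (fun x : ℝ => (1 - (-x / γ) ^ 2) ^ (β - 1))
        = fun x : ℝ => (1 - (x / γ) ^ 2) ^ (β - 1) := by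
      funext x; rw [neg_div, neg_sq]
    rw [this] at h2
    simpa using h2.symm
  exact hneg.trans half

lemma base_nonneg {γ p : ℝ} (hγ : 0 < γ) (hp : p ∈ Icc (-γ) γ) :
    0 ≤ 1 - (p / γ) ^ 2 := by
  obtain ⟨h1, h2⟩ := hp
  have h3 : p ^ 2 ≤ γ ^ 2 := sq_le_sq' h1 h2
  have : (p / γ) ^ 2 ≤ 1 := by
    rw [div_pow, div_le_one (by positivity)]; exact h3
  linarith

lemma symmBeta_integral {β γ : ℝ} (hβ : 0 < β) (hγ : 0 < γ) (h : ℝ → ℝ) :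
    ∫ p, h p ∂Trace.symmBeta β γ
      = (γ * Trace.betaNormConst β)⁻¹ *
        ∫ p in Icc (-γ) γ, (1 - (p / γ) ^ 2) ^ (β - 1) * h p := by
  have hB : 0 < Trace.betaNormConst β := by
    have h1 := Real.Gamma_pos_of_pos hβ
    have h2 := Real.Gamma_pos_of_pos (by linarith : (0 : ℝ) < 2 * β)
    have h3 : (0 : ℝ) < (2 : ℝ) ^ (2 * β - 1) := Real.rpow_pos_of_pos two_pos _
    unfold Trace.betaNormConst
    positivity
  have hrm : Measurable fun x : ℝ => x ^ (β - 1) := by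
    apply measurable_of_continuousOn_compl_singleton (0 : ℝ)
    exact continuousOn_of_forall_continuousAt fun x hx =>
      Real.continuousAt_rpow_const x (β - 1) (Or.inl hx)
  have hmeas : Measurable fun p : ℝ => (1 - (p / γ) ^ 2) ^ (β - 1) :=
    hrm.comp (measurable_const.sub ((measurable_id.div_const γ).pow_const 2))
  rw [Trace.symmBeta, integral_smul_measure]
  rw [show (fun x : ℝ => ENNReal.ofReal ((1 - (x / γ) ^ 2) ^ (β - 1)))
      = fun x : ℝ => ((Real.toNNReal ((1 - (x / γ) ^ 2) ^ (β - 1)) : NNReal) : ENNReal) from rfl]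
  rw [integral_withDensity_eq_integral_smul hmeas.real_toNNReal]
  have hcongr : ∫ x in Icc (-γ) γ, ((1 - (x / γ) ^ 2) ^ (β - 1)).toNNReal • h x
      = ∫ x in Icc (-γ) γ, (1 - (x / γ) ^ 2) ^ (β - 1) * h x := by
    refine setIntegral_congr_fun measurableSet_Icc fun x hx => ?_
    rw [NNReal.smul_def, smul_eq_mul, Real.coe_toNNReal _
      (Real.rpow_nonneg (base_nonneg hγ hx) _)]
  rw [hcongr, ENNReal.toReal_inv, ENNReal.toReal_ofReal (by positivity), smul_eq_mul]

lemma ibp_core {β γ : ℝ} (hβ : 0 < β) (hγ : 0 < γ) (g dg : ℝ → ℝ)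
    (hderiv : ∀ p, HasDerivAt g (dg p) p) (hgc : Continuous g) (hdgc : Continuous dg) :
    ∫ p in Icc (-γ) γ, (1 - (p / γ) ^ 2) ^ β * dg p
      = (2 * β / γ ^ 2) * ∫ p in Icc (-γ) γ, (1 - (p / γ) ^ 2) ^ (β - 1) * (p * g p) := by
  have hle : (-γ : ℝ) ≤ γ := by linarith
  have hFc : ContinuousOn (fun p : ℝ => (1 - (p / γ) ^ 2) ^ β) (Icc (-γ) γ) :=
    ContinuousOn.rpow_const (by fun_prop) fun x _ => Or.inr hβ.le
  have hρint := rho_intervalIntegrable hβ hγ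
  -- integrability of the two pieces
  have hInt1 : IntervalIntegrable (fun p => (1 - (p / γ) ^ 2) ^ β * dg p) volume (-γ) γ := by
    apply ContinuousOn.intervalIntegrable
    rw [uIcc_of_le hle]
    exact hFc.mul hdgc.continuousOn
  have hInt2 : IntervalIntegrable
      (fun p => (1 - (p / γ) ^ 2) ^ (β - 1) * (β * (-2 * p / γ ^ 2) * g p)) volume (-γ) γ :=
    hρint.mul_continuousOn (by fun_prop)
  -- derivative of F * g on the open interval
  have hG : ∀ p ∈ Ioo (-γ) γ, HasDerivAt (fun p => (1 - (p / γ) ^ 2) ^ β * g p)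
      ((1 - (p / γ) ^ 2) ^ (β - 1) * (β * (-2 * p / γ ^ 2) * g p)
        + (1 - (p / γ) ^ 2) ^ β * dg p) p := by
    intro p hp
    have hbpos : 0 < 1 - (p / γ) ^ 2 := by
      obtain ⟨h1, h2⟩ := hp
      have h3 : p ^ 2 < γ ^ 2 := sq_lt_sq' h1 h2
      have : (p / γ) ^ 2 < 1 := by
        rw [div_pow, div_lt_one (by positivity)]; exact h3
      linarith
    have hin : HasDerivAt (fun p : ℝ => 1 - (p / γ) ^ 2) (-(2 * p) / γ ^ 2) p := by
      have h0 : HasDerivAt (fun p : ℝ => (p / γ) ^ 2) (2 * (p / γ) ^ 1 * (1 / γ)) p :=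
        ((hasDerivAt_id p).div_const γ).pow 2
      have h2 := h0.const_sub 1
      refine h2.congr_deriv ?_
      rw [pow_one]
      ring
    have hF : HasDerivAt (fun p : ℝ => (1 - (p / γ) ^ 2) ^ β)
        (-(2 * p) / γ ^ 2 * β * (1 - (p / γ) ^ 2) ^ (β - 1)) p :=
      hin.rpow_const (Or.inl hbpos.ne')
    have := hF.mul (hderiv p)
    refine this.congr_deriv ?_
    ring
  -- FTC
  have hendL : (1 - ((-γ) / γ) ^ 2 : ℝ) ^ β = 0 := by
    rw [show (1 - ((-γ) / γ) ^ 2 : ℝ) = 0 by rw [neg_div, div_self hγ.ne']; ring,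
      Real.zero_rpow hβ.ne']
  have hendR : (1 - (γ / γ) ^ 2 : ℝ) ^ β = 0 := by
    rw [show (1 - (γ / γ) ^ 2 : ℝ) = 0 by rw [div_self hγ.ne']; ring,
      Real.zero_rpow hβ.ne']
  have hFTC := intervalIntegral.integral_eq_sub_of_hasDerivAt_of_le hle
    (ContinuousOn.mul hFc hgc.continuousOn) hG (hInt2.add hInt1)
  simp only [Pi.mul_apply] at hFTC
  rw [hendL, hendR, zero_mul, zero_mul, sub_zero] at hFTC
  rw [intervalIntegral.integral_add hInt2 hInt1] at hFTC
  -- convert Icc integrals to interval integrals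
  rw [integral_Icc_eq_integral_Ioc, integral_Icc_eq_integral_Ioc,
    ← intervalIntegral.integral_of_le hle, ← intervalIntegral.integral_of_le hle]
  have hswap : ∫ p in (-γ)..γ, (1 - (p / γ) ^ 2) ^ (β - 1) * (β * (-2 * p / γ ^ 2) * g p)
      = (-(2 * β / γ ^ 2)) * ∫ p in (-γ)..γ, (1 - (p / γ) ^ 2) ^ (β - 1) * (p * g p) := by
    rw [← intervalIntegral.integral_const_mul]
    refine intervalIntegral.integral_congr fun p _ => ?_
    ring
  rw [hswap] at hFTC
  linarith [hFTC]

end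
end FPAux

open MeasureTheory ProbabilityTheory in
/-- per-coordinate fingerprinting lemma with scaling. -/
theorem per_coordinate_fingerprinting (n : ℕ) (β γ : ℝ) (hβ : 0 < β)
    (hγ0 : 0 < γ) (hγ1 : γ ≤ 1) (f : (Fin n → Bool) → ℝ) :
    (∫ p, (∫ X, (1 - (p / γ) ^ 2) / (1 - p ^ 2) * f X * ∑ i, (Trace.signVec X i - p)
        ∂(Measure.pi fun _ : Fin n => Trace.signMeasure p))
      ∂Trace.symmBeta β γ)
    = 2 * β / γ ^ 2 *
      ∫ p, p * ∫ X, f X ∂(Measure.pi fun _ : Fin n => Trace.signMeasure p)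
        ∂Trace.symmBeta β γ := by
  classical
  rw [FPAux.symmBeta_integral hβ hγ0, FPAux.symmBeta_integral hβ hγ0]
  have hL : (∫ p in Set.Icc (-γ) γ, (1 - (p / γ) ^ 2) ^ (β - 1) *
        (∫ X, (1 - (p / γ) ^ 2) / (1 - p ^ 2) * f X * ∑ i, (Trace.signVec X i - p)
          ∂(Measure.pi fun _ : Fin n => Trace.signMeasure p)))
      = ∫ p in Set.Icc (-γ) γ, (1 - (p / γ) ^ 2) ^ β * (∑ X, FPAux.DW p X * f X) := by
    refine setIntegral_congr_fun measurableSet_Icc fun p hp => ?_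
    have hp1 : p ∈ Set.Icc (-1 : ℝ) 1 := ⟨by linarith [hp.1], by linarith [hp.2]⟩
    rw [FPAux.integral_pi_sign hp1]
    have hsum : (∑ X, FPAux.W p X *
          ((1 - (p / γ) ^ 2) / (1 - p ^ 2) * f X * ∑ i, (Trace.signVec X i - p)))
        = (1 - (p / γ) ^ 2) / (1 - p ^ 2) * ((1 - p ^ 2) * ∑ X, FPAux.DW p X * f X) := by
      rw [Finset.mul_sum, Finset.mul_sum]
      refine Finset.sum_congr rfl fun X _ => ?_
      have hk := FPAux.W_key p X
      have hsg : ∀ i, Trace.signVec X i = FPAux.sg (X i) := fun i => rfl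
      simp_rw [hsg]
      linear_combination ((1 - (p / γ) ^ 2) / (1 - p ^ 2) * f X) * hk
    rw [hsum]
    rcases eq_or_ne (1 - p ^ 2) 0 with hz | hz
    · rw [hz, div_zero, zero_mul]
      have hps : p ^ 2 ≤ γ ^ 2 := sq_le_sq' hp.1 hp.2
      have hγ2 : γ ^ 2 = 1 := by nlinarith [hp.1, hp.2]
      have hb0 : (1 : ℝ) - (p / γ) ^ 2 = 0 := by
        rw [div_pow, hγ2, show p ^ 2 = 1 by linarith]
        norm_num
      rw [hb0, Real.zero_rpow hβ.ne', zero_mul, mul_zero]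
    · have hb := FPAux.base_nonneg hγ0 hp
      have hr : (1 - (p / γ) ^ 2) ^ β
          = (1 - (p / γ) ^ 2) ^ (β - 1) * (1 - (p / γ) ^ 2) := by
        rcases eq_or_lt_of_le hb with hb0 | hbpos
        · rw [← hb0, Real.zero_rpow hβ.ne', mul_zero]
        · calc (1 - (p / γ) ^ 2) ^ β = (1 - (p / γ) ^ 2) ^ ((β - 1) + 1) := by norm_num
            _ = (1 - (p / γ) ^ 2) ^ (β - 1) * (1 - (p / γ) ^ 2) ^ (1 : ℝ) :=
                Real.rpow_add hbpos _ _
            _ = (1 - (p / γ) ^ 2) ^ (β - 1) * (1 - (p / γ) ^ 2) := by rw [Real.rpow_one]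
      rw [hr]
      field_simp
  have hR : (∫ p in Set.Icc (-γ) γ, (1 - (p / γ) ^ 2) ^ (β - 1) *
        (p * ∫ X, f X ∂(Measure.pi fun _ : Fin n => Trace.signMeasure p)))
      = ∫ p in Set.Icc (-γ) γ, (1 - (p / γ) ^ 2) ^ (β - 1) *
          (p * ∑ X, FPAux.W p X * f X) := by
    refine setIntegral_congr_fun measurableSet_Icc fun p hp => ?_
    have hp1 : p ∈ Set.Icc (-1 : ℝ) 1 := ⟨by linarith [hp.1], by linarith [hp.2]⟩
    rw [FPAux.integral_pi_sign hp1]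
  rw [hL, hR]
  rw [FPAux.ibp_core hβ hγ0 (fun p => ∑ X, FPAux.W p X * f X)
    (fun p => ∑ X, FPAux.DW p X * f X)
    (fun p => HasDerivAt.fun_sum fun X _ => (FPAux.hasDerivAt_W p X).mul_const (f X))
    (continuous_finset_sum _ fun X _ => (FPAux.continuous_W X).mul continuous_const)
    (continuous_finset_sum _ fun X _ => (FPAux.continuous_DW X).mul continuous_const)]
  ring
end
end

section
/- Let β ≥ 1 and let X be distributed according to the symmetric beta distribution on [−1,1] with parameter β (density (1 − x²)^{β−1}/B(β) where B(β) = 2^{2β−1}·Γ(β)²/Γ(2β)). Then E|X| ≥ 1/(3·√β). -/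
open MeasureTheory ProbabilityTheory

noncomputable section

namespace TraceAux
open MeasureTheory Real

lemma betaNorm_eq (β : ℝ) (hβ : 0 < β) :
    2 ^ (2 * β - 1) * Real.Gamma β ^ 2 / Real.Gamma (2 * β)
      = Real.sqrt π * Real.Gamma β / Real.Gamma (β + 1 / 2) := by
  have h := Real.Gamma_mul_Gamma_add_half β
  have h2 : 0 < Real.Gamma (β + 1 / 2) := Real.Gamma_pos_of_pos (by linarith)
  have h3 : 0 < Real.Gamma (2 * β) := Real.Gamma_pos_of_pos (by linarith)
  have h5 : (2 : ℝ) ^ (2 * β - 1) * (2 : ℝ) ^ (1 - 2 * β) = 1 := by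
    rw [← Real.rpow_add two_pos]; norm_num
  rw [div_eq_div_iff h3.ne' h2.ne']
  linear_combination ((2:ℝ) ^ (2*β-1) * Real.Gamma β) * h +
    (Real.sqrt π * Real.Gamma β * Real.Gamma (2*β)) * h5

lemma interval_calc (β : ℝ) (hβ : 1 ≤ β) :
    ∫ x in (-1:ℝ)..1, (1 - x ^ 2) ^ (β - 1) * |x| = 1 / β := by
  have hβ0 : (0:ℝ) < β := by linarith
  have hc : (0:ℝ) ≤ β - 1 := by linarith
  set g : ℝ → ℝ := fun u => |u| ^ (β - 1) with hg
  have hgc : Continuous g := continuous_abs.rpow_const fun x => Or.inr hc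
  have hG : Continuous fun x : ℝ => |1 - x ^ 2| ^ (β - 1) * |x| :=
    ((continuous_const.sub (continuous_pow 2)).abs.rpow_const fun x => Or.inr hc).mul
      continuous_abs
  have hderiv : ∀ x : ℝ, HasDerivAt (fun x : ℝ => 1 - x ^ 2) (-(2 * x)) x := by
    intro x
    simpa using ((hasDerivAt_pow 2 x).const_sub 1)
  have hsub : ∀ a b : ℝ, (∫ x in a..b, (-(2 * x)) • g (1 - x ^ 2))
      = ∫ u in (1 - a ^ 2)..(1 - b ^ 2), g u := fun a b =>
    intervalIntegral.integral_comp_smul_deriv (fun x _ => hderiv x)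
      ((continuous_const.mul continuous_id).neg.continuousOn) hgc
  have hrpow : ∫ u in (0:ℝ)..1, g u = 1 / β := by
    have e : ∫ u in (0:ℝ)..1, g u = ∫ u in (0:ℝ)..1, u ^ (β - 1) := by
      apply intervalIntegral.integral_congr
      intro u hu
      rw [Set.uIcc_of_le (by norm_num : (0:ℝ) ≤ 1)] at hu
      simp [hg, abs_of_nonneg hu.1]
    rw [e, integral_rpow (Or.inl (by linarith))]
    rw [Real.one_rpow, Real.zero_rpow (by intro h; linarith [h] : β - 1 + 1 ≠ 0)]
    norm_num
  have hcongr : ∫ x in (-1:ℝ)..1, (1 - x ^ 2) ^ (β - 1) * |x|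
      = ∫ x in (-1:ℝ)..1, |1 - x ^ 2| ^ (β - 1) * |x| := by
    apply intervalIntegral.integral_congr
    intro x hx
    rw [Set.uIcc_of_le (by norm_num : (-1:ℝ) ≤ 1)] at hx
    show (1 - x ^ 2) ^ (β - 1) * |x| = |1 - x ^ 2| ^ (β - 1) * |x|
    rw [abs_of_nonneg (by nlinarith [hx.1, hx.2] : (0:ℝ) ≤ 1 - x ^ 2)]
  have h01 : ∫ x in (0:ℝ)..1, |1 - x ^ 2| ^ (β - 1) * |x| = 1 / (2 * β) := by
    have e1 : ∫ x in (0:ℝ)..1, |1 - x ^ 2| ^ (β - 1) * |x|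
        = ∫ x in (0:ℝ)..1, (-(1/2 : ℝ)) * ((-(2 * x)) • g (1 - x ^ 2)) := by
      apply intervalIntegral.integral_congr
      intro x hx
      rw [Set.uIcc_of_le (by norm_num : (0:ℝ) ≤ 1)] at hx
      simp only [smul_eq_mul, hg]
      rw [abs_of_nonneg hx.1]
      ring
    rw [e1, intervalIntegral.integral_const_mul, hsub 0 1]
    rw [show (1:ℝ) - 0 ^ 2 = 1 by norm_num, show (1:ℝ) - 1 ^ 2 = 0 by norm_num]
    rw [intervalIntegral.integral_symm, hrpow]
    field_simp
  have hm0 : ∫ x in (-1:ℝ)..0, |1 - x ^ 2| ^ (β - 1) * |x| = 1 / (2 * β) := by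
    have e1 : ∫ x in (-1:ℝ)..0, |1 - x ^ 2| ^ (β - 1) * |x|
        = ∫ x in (-1:ℝ)..0, ((1/2 : ℝ)) * ((-(2 * x)) • g (1 - x ^ 2)) := by
      apply intervalIntegral.integral_congr
      intro x hx
      rw [Set.uIcc_of_le (by norm_num : (-1:ℝ) ≤ 0)] at hx
      simp only [smul_eq_mul, hg]
      rw [abs_of_nonpos hx.2]
      ring
    rw [e1, intervalIntegral.integral_const_mul, hsub (-1) 0]
    rw [show (1:ℝ) - (-1) ^ 2 = 0 by norm_num, show (1:ℝ) - 0 ^ 2 = 1 by norm_num]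
    rw [hrpow]
    field_simp
  rw [hcongr, ← intervalIntegral.integral_add_adjacent_intervals (a := (-1:ℝ)) (b := 0) (c := 1)
      (hG.intervalIntegrable _ _) (hG.intervalIntegrable _ _), h01, hm0]
  field_simp
  norm_num



lemma gamma_ratio (β : ℝ) (hβ : 1 ≤ β) :
    β ^ 2 * Real.Gamma β ^ 2 ≤ (β + 1 / 2) * Real.Gamma (β + 1 / 2) ^ 2 := by
  have hβ0 : (0:ℝ) < β := by linarith
  have hmem1 : (β + 1/2 : ℝ) ∈ Set.Ioi (0:ℝ) := by simp; linarith
  have hmem2 : (β + 3/2 : ℝ) ∈ Set.Ioi (0:ℝ) := by simp; linarith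
  have hcv := Real.convexOn_log_Gamma.2 hmem1 hmem2
    (by norm_num : (0:ℝ) ≤ 1/2) (by norm_num : (0:ℝ) ≤ 1/2) (by norm_num)
  have hpt : (1/2 : ℝ) • (β + 1/2) + (1/2 : ℝ) • (β + 3/2) = β + 1 := by
    simp only [smul_eq_mul]; ring
  rw [hpt] at hcv
  simp only [Function.comp_apply, smul_eq_mul] at hcv
  have h1 : 0 < Real.Gamma (β + 1) := Real.Gamma_pos_of_pos (by linarith)
  have h2 : 0 < Real.Gamma (β + 1/2) := Real.Gamma_pos_of_pos (by linarith)
  have h3 : 0 < Real.Gamma (β + 3/2) := Real.Gamma_pos_of_pos (by linarith)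
  have key : Real.Gamma (β + 1) ^ 2 ≤ Real.Gamma (β + 1/2) * Real.Gamma (β + 3/2) := by
    have := Real.exp_le_exp.mpr hcv
    rw [Real.exp_log h1] at this
    calc Real.Gamma (β + 1) ^ 2
        ≤ Real.exp (1/2 * Real.log (Real.Gamma (β + 1/2))
            + 1/2 * Real.log (Real.Gamma (β + 3/2))) ^ 2 := by
          have h0 := h1.le
          gcongr
      _ = Real.Gamma (β + 1/2) * Real.Gamma (β + 3/2) := by
          rw [sq, ← Real.exp_add]
          rw [show 1/2 * Real.log (Real.Gamma (β + 1/2)) + 1/2 * Real.log (Real.Gamma (β + 3/2))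
              + (1/2 * Real.log (Real.Gamma (β + 1/2)) + 1/2 * Real.log (Real.Gamma (β + 3/2)))
              = Real.log (Real.Gamma (β + 1/2)) + Real.log (Real.Gamma (β + 3/2)) by ring]
          rw [Real.exp_add, Real.exp_log h2, Real.exp_log h3]
  have e1 : Real.Gamma (β + 1) = β * Real.Gamma β := Real.Gamma_add_one hβ0.ne'
  have e2 : Real.Gamma (β + 3/2) = (β + 1/2) * Real.Gamma (β + 1/2) := by
    rw [show β + 3/2 = (β + 1/2) + 1 by ring]
    exact Real.Gamma_add_one (by positivity)
  rw [e1, e2] at key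
  nlinarith [key]

lemma betaNorm_le (β : ℝ) (hβ : 1 ≤ β)
    (heq : 2 ^ (2 * β - 1) * Real.Gamma β ^ 2 / Real.Gamma (2 * β)
      = Real.sqrt π * Real.Gamma β / Real.Gamma (β + 1 / 2)) :
    2 ^ (2 * β - 1) * Real.Gamma β ^ 2 / Real.Gamma (2 * β) ≤ 3 / Real.sqrt β := by
  have hβ0 : (0:ℝ) < β := by linarith
  have h1 : 0 < Real.Gamma β := Real.Gamma_pos_of_pos hβ0
  have h2 : 0 < Real.Gamma (β + 1/2) := Real.Gamma_pos_of_pos (by linarith)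
  set B : ℝ := Real.sqrt π * Real.Gamma β / Real.Gamma (β + 1 / 2) with hBdef
  rw [heq]
  have hB0 : 0 ≤ B := by positivity
  have hsq : B ^ 2 * β ≤ 9 := by
    have hratio := gamma_ratio β hβ
    have hπ : Real.sqrt π ^ 2 = π := Real.sq_sqrt Real.pi_pos.le
    have hB2 : B ^ 2 = π * Real.Gamma β ^ 2 / Real.Gamma (β + 1/2) ^ 2 := by
      rw [hBdef, div_pow, mul_pow, hπ]
    rw [hB2]
    rw [div_mul_eq_mul_div, div_le_iff₀ (by positivity)]
    have hpile : π ≤ 4 := by linarith [Real.pi_le_four]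
    -- π * Γβ² * β ≤ 9 * Γ(β+1/2)²
    have hstep : π * (β ^ 2 * Real.Gamma β ^ 2) ≤ π * ((β + 1/2) * Real.Gamma (β + 1/2) ^ 2) := by
      exact mul_le_mul_of_nonneg_left hratio Real.pi_pos.le
    have hstep2 : π * ((β + 1/2) * Real.Gamma (β + 1/2) ^ 2)
        ≤ 9 * β * Real.Gamma (β + 1/2) ^ 2 := by
      have : π * (β + 1/2) ≤ 9 * β := by nlinarith
      nlinarith [sq_nonneg (Real.Gamma (β + 1/2))]
    nlinarith [hstep, hstep2, sq_nonneg (Real.Gamma β), mul_pos hβ0 (mul_pos Real.pi_pos (pow_pos h1 2))]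
  have hsb : 0 < Real.sqrt β := Real.sqrt_pos.mpr hβ0
  rw [le_div_iff₀ hsb]
  have h9 : (B * Real.sqrt β) ^ 2 ≤ 3 ^ 2 := by
    rw [mul_pow, Real.sq_sqrt hβ0.le]; nlinarith
  nlinarith [h9, mul_nonneg hB0 hsb.le]


end TraceAux

open MeasureTheory ProbabilityTheory in
/-- Lemma `lemma:beta-expected-absolute-value`: first absolute moment
of the symmetric beta distribution. -/
theorem symmBeta_abs_moment_lower_bound (β : ℝ) (hβ : 1 ≤ β) :
    1 / (3 * Real.sqrt β) ≤ ∫ x, |x| ∂Trace.symmBeta β 1 := by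
  have hβ0 : (0:ℝ) < β := by linarith
  have hBeq := TraceAux.betaNorm_eq β hβ0
  have h1 : 0 < Real.Gamma β := Real.Gamma_pos_of_pos hβ0
  have h2 : 0 < Real.Gamma (β + 1 / 2) := Real.Gamma_pos_of_pos (by linarith)
  have hB : 0 < Trace.betaNormConst β := by
    rw [Trace.betaNormConst, hBeq]; positivity
  have hmeas : Measurable fun x : ℝ => Real.toNNReal ((1 - (x / 1) ^ 2) ^ (β - 1)) := by
    fun_prop
  have hint : ∫ x, |x| ∂Trace.symmBeta β 1
      = (Trace.betaNormConst β)⁻¹ * ∫ x in Set.Icc (-1:ℝ) 1, (1 - x ^ 2) ^ (β - 1) * |x| := by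
    rw [Trace.symmBeta, integral_smul_measure]
    have he : ((ENNReal.ofReal (1 * Trace.betaNormConst β))⁻¹).toReal
        = (Trace.betaNormConst β)⁻¹ := by
      rw [ENNReal.toReal_inv, ENNReal.toReal_ofReal (by positivity), one_mul]
    rw [he, smul_eq_mul]
    congr 1
    rw [show (fun x : ℝ => ENNReal.ofReal ((1 - (x / 1) ^ 2) ^ (β - 1)))
        = (fun x : ℝ => ((Real.toNNReal ((1 - (x / 1) ^ 2) ^ (β - 1)) : NNReal) : ENNReal)) from rfl]
    rw [integral_withDensity_eq_integral_smul hmeas]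
    apply setIntegral_congr_fun measurableSet_Icc
    intro x hx
    have hx2 : (0:ℝ) ≤ 1 - x ^ 2 := by nlinarith [hx.1, hx.2]
    simp only [div_one, NNReal.smul_def, Real.coe_toNNReal _ (Real.rpow_nonneg hx2 _), smul_eq_mul]
  rw [hint]
  have hIcc : ∫ x in Set.Icc (-1:ℝ) 1, (1 - x ^ 2) ^ (β - 1) * |x|
      = ∫ x in (-1:ℝ)..1, (1 - x ^ 2) ^ (β - 1) * |x| := by
    rw [intervalIntegral.integral_of_le (by norm_num : (-1:ℝ) ≤ 1),
      MeasureTheory.integral_Icc_eq_integral_Ioc]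
  rw [hIcc, TraceAux.interval_calc β hβ]
  have hle : Trace.betaNormConst β ≤ 3 / Real.sqrt β := by
    rw [Trace.betaNormConst]; exact TraceAux.betaNorm_le β hβ hBeq
  have hsb : 0 < Real.sqrt β := Real.sqrt_pos.mpr hβ0
  have hinv : Real.sqrt β / 3 ≤ (Trace.betaNormConst β)⁻¹ := by
    rw [show Real.sqrt β / 3 = (3 / Real.sqrt β)⁻¹ by rw [inv_div]]
    exact inv_anti₀ hB hle
  have hfinal : 1 / (3 * Real.sqrt β) = (Real.sqrt β / 3) * (1 / β) := by
    have hss : Real.sqrt β * Real.sqrt β = β := Real.mul_self_sqrt hβ0.le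
    rw [div_mul_div_comm, div_eq_div_iff (by positivity) (by positivity)]
    nlinarith [hss]
  rw [hfinal]
  exact mul_le_mul_of_nonneg_right hinv (by positivity)
end
end

section
/- Fix d, n ∈ ℕ, k ∈ [d], p ∈ [1,∞) with Hölder conjugate q, and α > 0. Let A_n be an α-learner for the hard problem P_{k,p}, and let D be any probability distribution on Z_k with mean μ = E_{Z∼D}[Z]. Then E_{S_n∼D^{⊗n}, θ̂∼A_n(S_n)}[⟨μ, θ̂⟩] ≥ d^{−1/p}·‖μ‖₁ − k^{1/q}·α. -/
open MeasureTheory ProbabilityTheory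

noncomputable section

open MeasureTheory ProbabilityTheory in
/-- Proposition `prop:learners-properies`: an `α`-learner for
`P_{k,p}` correlates with the distribution mean. -/
theorem alpha_learner_mean_correlation (d n k : ℕ) (hk1 : 1 ≤ k) (hkd : k ≤ d)
    (p q : ℝ) (hp : 1 ≤ p) (hq : 1 / q = 1 - 1 / p) (α : ℝ) (hα : 0 < α)
    (K : Kernel (Fin n → ↥(Trace.SparseZ d k)) (Fin d → ℝ))
    (hK : Trace.IsAlphaLearner (Trace.hardProblem d k p) K α)
    (D : Measure ↥(Trace.SparseZ d k)) (hD : IsProbabilityMeasure D)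
    (μ : Fin d → ℝ) (hμ : ∀ j, μ j = ∫ z, z.1 j ∂D) :
    (d : ℝ) ^ (-(1 : ℝ) / p) * (∑ j, |μ j|) - (k : ℝ) ^ ((1 : ℝ) / q) * α ≤
      ∫ x, ∑ j, μ j * x.2 j ∂Trace.jointMeasure D K := by
  classical
  set c : ℝ := (k : ℝ) ^ ((1 : ℝ) / p - 1) with hc
  have hk0 : (0 : ℝ) < k := by exact_mod_cast hk1
  have hd0 : (0 : ℝ) < d := by exact_mod_cast lt_of_lt_of_le (by exact_mod_cast hk1) hkd
  have hcpos : 0 < c := Real.rpow_pos_of_pos hk0 _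
  have hr : (0 : ℝ) < (d : ℝ) ^ (-(1 : ℝ) / p) := Real.rpow_pos_of_pos hd0 _
  set r : ℝ := (d : ℝ) ^ (-(1 : ℝ) / p) with hrdef
  -- integrability of coordinates
  have hintz : ∀ i : Fin d, Integrable (fun z : ↥(Trace.SparseZ d k) => z.1 i) D := by
    intro i
    refine (integrable_const (1 : ℝ)).mono' ?_ ?_
    · exact ((measurable_pi_apply i).comp measurable_subtype_coe).aestronglyMeasurable
    · refine Filter.Eventually.of_forall fun z => ?_
      rcases z.2.1 i with h | h | h <;> simp [h]
  -- risk formula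
  have hrisk : ∀ θ : Fin d → ℝ,
      (Trace.hardProblem d k p).risk D θ = -(c * ∑ i, θ i * μ i) := by
    intro θ
    have : (Trace.hardProblem d k p).risk D θ
        = ∫ z, -(c * ∑ i, θ i * z.1 i) ∂D := rfl
    rw [this, integral_neg, integral_const_mul,
      integral_finset_sum _ (fun i _ => (hintz i).const_mul (θ i))]
    have : ∀ i : Fin d, ∫ z, θ i * z.1 i ∂D = θ i * μ i := by
      intro i
      rw [integral_const_mul, ← hμ i]
    simp only [this]
  -- the maximizer θ*
  set θs : Fin d → ℝ := fun j => if 0 ≤ μ j then r else -r with hθs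
  have hθsdom : θs ∈ (Trace.hardProblem d k p).dom := by
    intro i
    by_cases h : 0 ≤ μ i <;> simp [hθs, h, abs_of_pos hr, hr.le] <;> exact le_of_eq hrdef
  have hθsval : ∑ i, θs i * μ i = r * ∑ j, |μ j| := by
    rw [Finset.mul_sum]
    refine Finset.sum_congr rfl fun i _ => ?_
    by_cases h : 0 ≤ μ i
    · simp [hθs, h, abs_of_nonneg h]
    · push_neg at h
      simp [hθs, h.not_ge, abs_of_neg h]
  -- bound on risk over the domain
  have hbdd : ∀ θ ∈ (Trace.hardProblem d k p).dom,
      -(c * (r * ∑ j, |μ j|)) ≤ (Trace.hardProblem d k p).risk D θ := by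
    intro θ hθ
    rw [hrisk θ, neg_le_neg_iff]
    have h1 : ∑ i, θ i * μ i ≤ r * ∑ j, |μ j| := by
      rw [Finset.mul_sum]
      refine Finset.sum_le_sum fun i _ => ?_
      calc θ i * μ i ≤ |θ i * μ i| := le_abs_self _
        _ = |θ i| * |μ i| := abs_mul _ _
        _ ≤ r * |μ i| := by
            have := hθ i
            exact mul_le_mul_of_nonneg_right this (abs_nonneg _)
    exact mul_le_mul_of_nonneg_left h1 hcpos.le
  have hinf_le : (⨅ θ : (Trace.hardProblem d k p).dom,
      (Trace.hardProblem d k p).risk D θ.1) ≤ -(c * (r * ∑ j, |μ j|)) := by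
    have := ciInf_le (f := fun θ : (Trace.hardProblem d k p).dom =>
        (Trace.hardProblem d k p).risk D θ.1)
      ⟨-(c * (r * ∑ j, |μ j|)), by
        rintro x ⟨θ, rfl⟩; exact hbdd θ.1 θ.2⟩ ⟨θs, hθsdom⟩
    calc _ ≤ (Trace.hardProblem d k p).risk D θs := this
      _ = -(c * (r * ∑ j, |μ j|)) := by rw [hrisk, hθsval]
  -- learner guarantee
  have hlearn := hK.2.2 D hD
  -- rewrite the joint integral
  have hjoint : ∫ x, (Trace.hardProblem d k p).risk D x.2
        ∂Trace.jointMeasure D K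
      = -(c * ∫ x, ∑ j, μ j * x.2 j ∂Trace.jointMeasure D K) := by
    simp only [hrisk]
    rw [integral_neg, integral_const_mul]
    congr 1
    congr 1
    refine integral_congr_ae (Filter.Eventually.of_forall fun x => ?_)
    exact Finset.sum_congr rfl fun i _ => mul_comm _ _
  have hlearn' : (∫ x : (Fin n → ↥(Trace.SparseZ d k)) × (Fin d → ℝ),
        (Trace.hardProblem d k p).risk D x.2 ∂Trace.jointMeasure D K)
      - (⨅ θ : (Trace.hardProblem d k p).dom,
          (Trace.hardProblem d k p).risk D θ.1) ≤ α := hlearn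
  rw [hjoint] at hlearn'
  set I : ℝ := ∫ x, ∑ j, μ j * x.2 j ∂Trace.jointMeasure D K with hI
  have key : -(c * I) ≤ α + -(c * (r * ∑ j, |μ j|)) := by linarith [hlearn', hinf_le]
  -- convert k^{1/q}
  have hck : c * (k : ℝ) ^ ((1 : ℝ) / q) = 1 := by
    rw [hc, hq, ← Real.rpow_add hk0]
    norm_num
  nlinarith [mul_le_mul_of_nonneg_left key hcpos.le,
    mul_pos hcpos (Real.rpow_pos_of_pos hk0 ((1:ℝ)/q))]
end
end

section
/- Fix d ∈ ℕ, k ∈ [d], p ∈ [1,∞), and μ ∈ [−k/d, k/d]^d. Let Θ = {θ ∈ ℝ^d : ‖θ‖_∞ ≤ d^{−1/p}} and define φ(θ,z) = (d^{1/p}/√k)·Σ_{j∈supp(z)} θ^j·(z^j − (d/k)·μ^j). Then there is a universal constant C > 0 such that, for Z ∼ D_{μ,k}, the collection {φ(θ,Z)}_{θ∈Θ} is a C-subgaussian process with respect to (Θ, ‖·‖_Θ). -/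
open MeasureTheory ProbabilityTheory

noncomputable section

namespace SubgTracerAux

open Real MeasureTheory Finset Trace

/-- `exp y ≤ y + exp (y^2)` for all real `y`. -/
lemma exp_le_add_exp_sq (y : ℝ) : Real.exp y ≤ y + Real.exp (y ^ 2) := by
  rcases le_or_gt 1 y with h | h
  · have h1 : y ≤ y ^ 2 := by nlinarith
    have := Real.exp_le_exp.mpr h1
    linarith
  rcases le_or_gt y (-1) with h' | h'
  · have h1 : Real.exp y ≤ 1 := Real.exp_le_one_iff.mpr (by linarith)
    have h2 : y ^ 2 + 1 ≤ Real.exp (y ^ 2) := Real.add_one_le_exp _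
    nlinarith
  · have habs : |y| ≤ 1 := abs_le.mpr ⟨h'.le, h.le⟩
    have hb := Real.exp_bound habs (n := 3) (by norm_num)
    have hs : ∑ i ∈ Finset.range 3, y ^ i / (Nat.factorial i : ℝ) = 1 + y + y ^ 2 / 2 := by
      norm_num [Finset.sum_range_succ, Nat.factorial]
    rw [hs] at hb
    have h2 : y ^ 2 + 1 ≤ Real.exp (y ^ 2) := Real.add_one_le_exp _
    have hb' : Real.exp y - (1 + y + y ^ 2 / 2) ≤ |y| ^ 3 * (4 / (6 * 3)) := by
      have h4 := (abs_le.mp hb).2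
      norm_num [Nat.factorial] at h4 ⊢
      linarith
    have h3 : |y| ^ 3 ≤ y ^ 2 := by
      have he : |y| ^ 3 = |y| * y ^ 2 := by rw [← sq_abs]; ring
      nlinarith [abs_nonneg y, sq_nonneg y]
    nlinarith

lemma combo_exp_le {q a₁ a₂ c lam : ℝ} (hq0 : 0 ≤ q) (hq1 : q ≤ 1)
    (hmean : q * a₁ + (1 - q) * a₂ = 0) (h1 : (lam * a₁) ^ 2 ≤ c) (h2 : (lam * a₂) ^ 2 ≤ c) :
    q * Real.exp (lam * a₁) + (1 - q) * Real.exp (lam * a₂) ≤ Real.exp c := by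
  have e1 : Real.exp (lam * a₁) ≤ lam * a₁ + Real.exp c :=
    (exp_le_add_exp_sq _).trans (by linarith [Real.exp_le_exp.mpr h1])
  have e2 : Real.exp (lam * a₂) ≤ lam * a₂ + Real.exp c :=
    (exp_le_add_exp_sq _).trans (by linarith [Real.exp_le_exp.mpr h2])
  have hA := mul_le_mul_of_nonneg_left e1 hq0
  have hB := mul_le_mul_of_nonneg_left e2 (by linarith : (0:ℝ) ≤ 1 - q)
  have hkey : q * (lam * a₁ + Real.exp c) + (1 - q) * (lam * a₂ + Real.exp c)
      = lam * (q * a₁ + (1 - q) * a₂) + Real.exp c := by ring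
  rw [hmean] at hkey
  nlinarith

lemma integrable_exp_linear_sub_sq (c : ℝ) :
    Integrable (fun x : ℝ => Real.exp (c * x - x ^ 2)) := by
  have h : (fun x : ℝ => Real.exp (c * x - x ^ 2))
      = fun x => Real.exp (c ^ 2 / 4) * Real.exp (-1 * (x - c / 2) ^ 2) := by
    funext x
    rw [← Real.exp_add]
    ring_nf
  rw [h]
  exact ((integrable_exp_neg_mul_sq one_pos).comp_sub_right (c / 2)).const_mul _

lemma integral_exp_linear_sub_sq (c : ℝ) :
    ∫ x : ℝ, Real.exp (c * x - x ^ 2) = Real.sqrt π * Real.exp (c ^ 2 / 4) := by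
  have h : (fun x : ℝ => Real.exp (c * x - x ^ 2))
      = fun x => Real.exp (c ^ 2 / 4) * Real.exp (-1 * (x - c / 2) ^ 2) := by
    funext x
    rw [← Real.exp_add]
    ring_nf
  rw [h, MeasureTheory.integral_const_mul]
  have h2 : ∫ x : ℝ, Real.exp (-1 * (x - c / 2) ^ 2)
      = ∫ x : ℝ, Real.exp (-1 * x ^ 2) :=
    integral_sub_right_eq_self (fun x => Real.exp (-1 * x ^ 2)) (c / 2)
  rw [h2, integral_gaussian, div_one]
  ring

lemma sparseZ_finite (d k : ℕ) : (SparseZ d k).Finite := by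
  have hfin : (Set.pi Set.univ fun _ : Fin d => ({0, 1, -1} : Set ℝ)).Finite :=
    Set.Finite.pi fun _ => ((Set.finite_singleton (-1 : ℝ)).insert 1).insert 0
  refine hfin.subset ?_
  intro z hz i _
  rcases hz.1 i with h | h | h <;> simp [h]

def zmk {d : ℕ} (J P : Finset (Fin d)) : Fin d → ℝ := fun i =>
  if i ∈ P then 1 else if i ∈ J then -1 else 0

lemma sparseSupport_zmk {d : ℕ} {J P : Finset (Fin d)} (hPJ : P ⊆ J) :
    sparseSupport (zmk J P) = J := by
  ext i
  simp only [sparseSupport, Finset.mem_filter, Finset.mem_univ, true_and]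
  unfold zmk
  split_ifs with h1 h2
  · simp [hPJ h1]
  · simp [h2]
  · simp [h2]

lemma zmk_mem {d k : ℕ} {J P : Finset (Fin d)} (hPJ : P ⊆ J) (hJk : J.card = k) :
    zmk J P ∈ SparseZ d k := by
  constructor
  · intro i
    unfold zmk
    split_ifs <;> simp
  · rw [sparseSupport_zmk hPJ, hJk]

lemma m_abs_le {d k : ℕ} {μ : Fin d → ℝ} (hk : 1 ≤ k) (hkd : k ≤ d)
    (hμ : ∀ j, |μ j| ≤ (k : ℝ) / d) (j : Fin d) : |(d : ℝ) / k * μ j| ≤ 1 := by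
  have hk0 : (0:ℝ) < k := by exact_mod_cast hk
  have hd0 : (0:ℝ) < d := by exact_mod_cast hk.trans hkd
  have h3 : |(d : ℝ) / k * μ j| = (d : ℝ) / k * |μ j| := by
    rw [abs_mul, abs_of_nonneg (by positivity)]
  rw [h3]
  calc (d : ℝ) / k * |μ j| ≤ (d : ℝ) / k * ((k : ℝ) / d) :=
        mul_le_mul_of_nonneg_left (hμ j) (by positivity)
    _ = 1 := by field_simp

lemma z_abs_le {d k : ℕ} (z : ↥(SparseZ d k)) (j : Fin d) : |z.1 j| ≤ 1 := by
  rcases z.2.1 j with h | h | h <;> simp [h]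

lemma w_nonneg {d k : ℕ} {μ : Fin d → ℝ} (hk : 1 ≤ k) (hkd : k ≤ d)
    (hμ : ∀ j, |μ j| ≤ (k : ℝ) / d) (z : ↥(SparseZ d k)) :
    0 ≤ (d.choose k : ℝ)⁻¹ *
        ∏ j ∈ sparseSupport z.1, (1 + (d : ℝ) / k * μ j * z.1 j) / 2 := by
  refine mul_nonneg (by positivity) (Finset.prod_nonneg fun j _ => ?_)
  have h1 : |(d : ℝ) / k * μ j * z.1 j| ≤ 1 := by
    rw [abs_mul]
    calc |(d : ℝ) / k * μ j| * |z.1 j| ≤ 1 * 1 :=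
          mul_le_mul (m_abs_le hk hkd hμ j) (z_abs_le z j) (abs_nonneg _) zero_le_one
      _ = 1 := one_mul 1
  have := (abs_le.mp h1).1
  linarith

lemma mgf_sum {d k : ℕ} {μ : Fin d → ℝ} [Fintype ↥(SparseZ d k)] (hk : 1 ≤ k) (hkd : k ≤ d)
    (hμ : ∀ j, |μ j| ≤ (k : ℝ) / d) (v : Fin d → ℝ) (B : ℝ) (hv : ∀ j, |v j| ≤ B)
    (lam : ℝ) :
    ∑ z : ↥(SparseZ d k),
        ((d.choose k : ℝ)⁻¹ * ∏ j ∈ sparseSupport z.1, (1 + (d : ℝ) / k * μ j * z.1 j) / 2) *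
          Real.exp (lam * sparsePhi d k μ v z)
      ≤ Real.exp (4 * k * lam ^ 2 * B ^ 2) := by
  classical
  have hm : ∀ j, |(d : ℝ) / k * μ j| ≤ 1 := m_abs_le hk hkd hμ
  set m : Fin d → ℝ := fun j => (d : ℝ) / k * μ j with hm_def
  set A : Fin d → ℝ := fun j => (1 + m j) / 2 * Real.exp (lam * (v j * (1 - m j))) with hA_def
  set Bb : Fin d → ℝ := fun j => (1 - m j) / 2 * Real.exp (lam * (v j * (-1 - m j))) with hB_def
  have hA0 : ∀ j, 0 ≤ A j := by
    intro j
    have h1 := (abs_le.mp (hm j)).1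
    have he := (Real.exp_pos (lam * (v j * (1 - m j)))).le
    have h2 : (0:ℝ) ≤ (1 + m j) / 2 := by simp only [hm_def]; linarith
    exact mul_nonneg h2 he
  have hBb0 : ∀ j, 0 ≤ Bb j := by
    intro j
    have h1 := (abs_le.mp (hm j)).2
    have he := (Real.exp_pos (lam * (v j * (-1 - m j)))).le
    have h2 : (0:ℝ) ≤ (1 - m j) / 2 := by simp only [hm_def]; linarith
    exact mul_nonneg h2 he
  have hAB : ∀ j, A j + Bb j ≤ Real.exp (4 * lam ^ 2 * B ^ 2) := by
    intro j
    have hmj := abs_le.mp (hm j)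
    have hvj := abs_le.mp (hv j)
    have hB0 : 0 ≤ B := (abs_nonneg _).trans (hv j)
    have hv2 : v j ^ 2 ≤ B ^ 2 := sq_le_sq' hvj.1 hvj.2
    have hq0 : (0:ℝ) ≤ (1 + m j) / 2 := by
      show (0:ℝ) ≤ (1 + (d : ℝ) / k * μ j) / 2
      linarith [hmj.1]
    have hq1 : (1 + m j) / 2 ≤ 1 := by
      show (1 + (d : ℝ) / k * μ j) / 2 ≤ 1
      linarith [hmj.2]
    have hmean : (1 + m j) / 2 * (v j * (1 - m j))
        + (1 - (1 + m j) / 2) * (v j * (-1 - m j)) = 0 := by ring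
    have hs1 : (lam * (v j * (1 - m j))) ^ 2 ≤ 4 * lam ^ 2 * B ^ 2 := by
      show (lam * (v j * (1 - (d : ℝ) / k * μ j))) ^ 2 ≤ 4 * lam ^ 2 * B ^ 2
      have h1m : (1 - (d : ℝ) / k * μ j) ^ 2 ≤ 4 := by nlinarith [hmj.1, hmj.2]
      nlinarith [sq_nonneg lam, sq_nonneg (v j), sq_nonneg (1 - (d : ℝ) / k * μ j), sq_nonneg B,
        mul_le_mul hv2 h1m (sq_nonneg _) (sq_nonneg B)]
    have hs2 : (lam * (v j * (-1 - m j))) ^ 2 ≤ 4 * lam ^ 2 * B ^ 2 := by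
      show (lam * (v j * (-1 - (d : ℝ) / k * μ j))) ^ 2 ≤ 4 * lam ^ 2 * B ^ 2
      have h1m : (-1 - (d : ℝ) / k * μ j) ^ 2 ≤ 4 := by nlinarith [hmj.1, hmj.2]
      nlinarith [sq_nonneg lam, sq_nonneg (v j), sq_nonneg (-1 - (d : ℝ) / k * μ j), sq_nonneg B,
        mul_le_mul hv2 h1m (sq_nonneg _) (sq_nonneg B)]
    have := combo_exp_le hq0 hq1 hmean hs1 hs2
    have heq : (1 - m j) / 2 = 1 - (1 + m j) / 2 := by ring
    rw [hA_def, hB_def]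
    simp only
    rw [heq]
    exact this
  -- reindex the sum over sparse vectors by (support, positive part)
  have step1 : (∑ z : ↥(SparseZ d k),
        ((d.choose k : ℝ)⁻¹ * ∏ j ∈ sparseSupport z.1, (1 + (d : ℝ) / k * μ j * z.1 j) / 2) *
          Real.exp (lam * sparsePhi d k μ v z))
      = ∑ x ∈ (Finset.univ.powersetCard k).sigma (fun J => J.powerset),
          (d.choose k : ℝ)⁻¹ * ∏ j ∈ x.1, (if j ∈ x.2 then A j else Bb j) := by
    refine Finset.sum_bij'
      (i := fun (z : ↥(SparseZ d k)) (_ : z ∈ Finset.univ) =>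
        (⟨sparseSupport z.1, Finset.univ.filter fun j => z.1 j = 1⟩ :
          Σ _ : Finset (Fin d), Finset (Fin d)))
      (j := fun x hx =>
        ⟨zmk x.1 x.2,
          zmk_mem (Finset.mem_powerset.mp (Finset.mem_sigma.mp hx).2)
            ((Finset.mem_powersetCard.mp (Finset.mem_sigma.mp hx).1).2)⟩)
      ?_ ?_ ?_ ?_ ?_
    · intro z _
      refine Finset.mem_sigma.mpr ⟨Finset.mem_powersetCard.mpr ⟨Finset.subset_univ _, z.2.2⟩, ?_⟩
      refine Finset.mem_powerset.mpr ?_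
      intro j hj
      simp only [mem_filter, mem_univ, true_and] at hj
      simp only [sparseSupport, mem_filter, mem_univ, true_and]
      rw [hj]
      norm_num
    · intro x hx
      exact Finset.mem_univ _
    · intro z _
      apply Subtype.ext
      funext idx
      show zmk (sparseSupport z.1) (Finset.univ.filter fun j => z.1 j = 1) idx = z.1 idx
      rcases z.2.1 idx with h0 | h1 | hm1
      · have c1 : idx ∉ Finset.univ.filter fun j => z.1 j = 1 := by
          simp [h0]
        have c2 : idx ∉ sparseSupport z.1 := by
          simp [sparseSupport, h0]
        simp [zmk, c1, c2, h0]
      · have c1 : idx ∈ Finset.univ.filter fun j => z.1 j = 1 := by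
          simp [h1]
        simp [zmk, c1, h1]
      · have c1 : idx ∉ Finset.univ.filter fun j => z.1 j = 1 := by
          simp only [mem_filter, mem_univ, true_and, hm1]
          norm_num
        have c2 : idx ∈ sparseSupport z.1 := by
          simp [sparseSupport, hm1]
        simp [zmk, c1, c2, hm1]
    · intro x hx
      obtain ⟨J, P⟩ := x
      have hPJ : P ⊆ J := Finset.mem_powerset.mp (Finset.mem_sigma.mp hx).2
      have h1 : sparseSupport (zmk J P) = J := sparseSupport_zmk hPJ
      have h2 : (Finset.univ.filter fun j => zmk J P j = 1) = P := by
        ext i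
        simp only [Finset.mem_filter, Finset.mem_univ, true_and]
        unfold zmk
        split_ifs with hi1 hi2
        · simp [hi1]
        · constructor
          · intro hcon; norm_num at hcon
          · intro hcon; exact absurd hcon hi1
        · constructor
          · intro hcon; norm_num at hcon
          · intro hcon; exact absurd hcon hi1
      show (⟨sparseSupport (zmk J P), Finset.univ.filter fun j => zmk J P j = 1⟩ :
          Σ _ : Finset (Fin d), Finset (Fin d)) = ⟨J, P⟩
      rw [h1, h2]
    · intro z _
      show _ = (d.choose k : ℝ)⁻¹ * ∏ j ∈ sparseSupport z.1,
        (if j ∈ Finset.univ.filter (fun j => z.1 j = 1) then A j else Bb j)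
      rw [sparsePhi, Finset.mul_sum, Real.exp_sum, mul_assoc, ← Finset.prod_mul_distrib]
      congr 1
      refine Finset.prod_congr rfl fun j hj => ?_
      have hjne : z.1 j ≠ 0 := by
        simpa [sparseSupport] using hj
      rcases z.2.1 j with h0 | h1 | hm1
      · exact absurd h0 hjne
      · have c1 : j ∈ Finset.univ.filter fun i => z.1 i = 1 := by simp [h1]
        rw [if_pos c1, hA_def]
        simp only
        rw [h1]
        simp only [hm_def]
        ring_nf
      · have c1 : j ∉ Finset.univ.filter fun i => z.1 i = 1 := by
          simp only [mem_filter, mem_univ, true_and, hm1]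
          norm_num
        rw [if_neg c1, hB_def]
        simp only
        rw [hm1]
        simp only [hm_def]
        ring_nf
  rw [step1, Finset.sum_sigma]
  have step2 : ∀ J ∈ Finset.univ.powersetCard k,
      (∑ P ∈ J.powerset, (d.choose k : ℝ)⁻¹ * ∏ j ∈ J, (if j ∈ P then A j else Bb j))
        = (d.choose k : ℝ)⁻¹ * ∏ j ∈ J, (A j + Bb j) := by
    intro J _
    rw [← Finset.mul_sum]
    congr 1
    rw [Finset.prod_add]
    refine Finset.sum_congr rfl fun P hP => ?_
    have hPJ := Finset.mem_powerset.mp hP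
    nth_rewrite 1 [← Finset.union_sdiff_of_subset hPJ]
    rw [Finset.prod_union Finset.disjoint_sdiff]
    congr 1
    · exact Finset.prod_congr rfl fun j hj => if_pos hj
    · refine Finset.prod_congr rfl fun j hj => if_neg ?_
      exact (Finset.mem_sdiff.mp hj).2
  rw [Finset.sum_congr rfl step2]
  have hchoose : (0:ℝ) < (d.choose k : ℝ) := by
    exact_mod_cast Nat.choose_pos hkd
  calc ∑ J ∈ Finset.univ.powersetCard k, (d.choose k : ℝ)⁻¹ * ∏ j ∈ J, (A j + Bb j)
      ≤ ∑ J ∈ Finset.univ.powersetCard k,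
          (d.choose k : ℝ)⁻¹ * Real.exp (4 * k * lam ^ 2 * B ^ 2) := by
        refine Finset.sum_le_sum fun J hJ => ?_
        have hJk : J.card = k := (Finset.mem_powersetCard.mp hJ).2
        have h1 : ∏ j ∈ J, (A j + Bb j) ≤ ∏ j ∈ J, Real.exp (4 * lam ^ 2 * B ^ 2) :=
          Finset.prod_le_prod (fun j _ => add_nonneg (hA0 j) (hBb0 j)) (fun j _ => hAB j)
        have h2 : ∏ _j ∈ J, Real.exp (4 * lam ^ 2 * B ^ 2)
            = Real.exp (4 * k * lam ^ 2 * B ^ 2) := by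
          rw [Finset.prod_const, hJk, ← Real.exp_nat_mul]
          congr 1
          ring
        exact mul_le_mul_of_nonneg_left (h1.trans_eq h2) (by positivity)
    _ = Real.exp (4 * k * lam ^ 2 * B ^ 2) := by
        rw [Finset.sum_const, Finset.card_powersetCard, Finset.card_univ, Fintype.card_fin,
          nsmul_eq_mul]
        field_simp

lemma integral_sparseDist {d k : ℕ} {μ : Fin d → ℝ} [Fintype ↥(SparseZ d k)]
    (f : ↥(SparseZ d k) → ℝ) (hf0 : ∀ z, 0 ≤ f z)
    (hw0 : ∀ z : ↥(SparseZ d k),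
      0 ≤ (d.choose k : ℝ)⁻¹ * ∏ j ∈ sparseSupport z.1, (1 + (d : ℝ) / k * μ j * z.1 j) / 2) :
    ∫ z, f z ∂(sparseDist d k μ)
      = ∑ z : ↥(SparseZ d k),
          ((d.choose k : ℝ)⁻¹ * ∏ j ∈ sparseSupport z.1, (1 + (d : ℝ) / k * μ j * z.1 j) / 2)
            * f z := by
  rw [integral_eq_lintegral_of_nonneg_ae (Filter.Eventually.of_forall hf0)
      (measurable_of_countable f).aestronglyMeasurable]
  simp only [Trace.sparseDist]
  rw [lintegral_sum_measure]
  simp only [lintegral_smul_measure, lintegral_dirac]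
  rw [tsum_fintype]
  have hterm : ∀ z ∈ (Finset.univ : Finset ↥(SparseZ d k)),
      ENNReal.ofReal
          ((d.choose k : ℝ)⁻¹ * ∏ j ∈ sparseSupport z.1, (1 + (d : ℝ) / k * μ j * z.1 j) / 2)
        * ENNReal.ofReal (f z)
      = ENNReal.ofReal
          (((d.choose k : ℝ)⁻¹ * ∏ j ∈ sparseSupport z.1, (1 + (d : ℝ) / k * μ j * z.1 j) / 2)
            * f z) :=
    fun z _ => (ENNReal.ofReal_mul (hw0 z)).symm
  simp only [smul_eq_mul]
  rw [Finset.sum_congr rfl hterm,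
    ← ENNReal.ofReal_sum_of_nonneg (fun z _ => mul_nonneg (hw0 z) (hf0 z)),
    ENNReal.toReal_ofReal (Finset.sum_nonneg fun z _ => mul_nonneg (hw0 z) (hf0 z))]

lemma key_integral {d k : ℕ} {μ : Fin d → ℝ} [Fintype ↥(SparseZ d k)] (hk : 1 ≤ k) (hkd : k ≤ d)
    (hμ : ∀ j, |μ j| ≤ (k : ℝ) / d) (v : Fin d → ℝ) (B : ℝ) (hB : 0 < B)
    (hv : ∀ j, |v j| ≤ B) :
    ∫ z, Real.exp ((sparsePhi d k μ v z) ^ 2 / (36 * (k : ℝ) * B ^ 2)) ∂(sparseDist d k μ)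
      ≤ 2 := by
  classical
  have hk0 : (0:ℝ) < k := by exact_mod_cast hk
  have hsk : (0:ℝ) < Real.sqrt k := Real.sqrt_pos.mpr hk0
  set τ : ℝ := 6 * Real.sqrt k * B with hτ_def
  have hτ0 : 0 < τ := by positivity
  have hτsq : τ ^ 2 = 36 * (k : ℝ) * B ^ 2 := by
    rw [hτ_def, mul_pow, mul_pow, Real.sq_sqrt hk0.le]
    ring
  have hkne : (k:ℝ) ≠ 0 := hk0.ne'
  have hBne : B ≠ 0 := hB.ne'
  rw [integral_sparseDist _ (fun z => (Real.exp_pos _).le) (w_nonneg hk hkd hμ)]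
  have hpt : ∀ z : ↥(SparseZ d k),
      Real.exp ((sparsePhi d k μ v z) ^ 2 / (36 * (k : ℝ) * B ^ 2))
        = (Real.sqrt π)⁻¹ * ∫ x : ℝ, Real.exp ((2 * sparsePhi d k μ v z / τ) * x - x ^ 2) := by
    intro z
    rw [integral_exp_linear_sub_sq, ← mul_assoc,
      inv_mul_cancel₀ (ne_of_gt (Real.sqrt_pos.mpr Real.pi_pos)), one_mul]
    congr 1
    rw [div_pow, mul_pow, hτsq]
    field_simp
    ring
  calc ∑ z : ↥(SparseZ d k),
        ((d.choose k : ℝ)⁻¹ * ∏ j ∈ sparseSupport z.1, (1 + (d : ℝ) / k * μ j * z.1 j) / 2) *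
          Real.exp ((sparsePhi d k μ v z) ^ 2 / (36 * (k : ℝ) * B ^ 2))
      = (Real.sqrt π)⁻¹ * ∑ z : ↥(SparseZ d k),
          ∫ x : ℝ,
            ((d.choose k : ℝ)⁻¹ * ∏ j ∈ sparseSupport z.1, (1 + (d : ℝ) / k * μ j * z.1 j) / 2) *
              Real.exp ((2 * sparsePhi d k μ v z / τ) * x - x ^ 2) := by
        rw [Finset.mul_sum]
        refine Finset.sum_congr rfl fun z _ => ?_
        rw [hpt z, MeasureTheory.integral_const_mul]
        ring
    _ = (Real.sqrt π)⁻¹ * ∫ x : ℝ, ∑ z : ↥(SparseZ d k),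
          ((d.choose k : ℝ)⁻¹ * ∏ j ∈ sparseSupport z.1, (1 + (d : ℝ) / k * μ j * z.1 j) / 2) *
            Real.exp ((2 * sparsePhi d k μ v z / τ) * x - x ^ 2) := by
        congr 1
        exact (integral_finset_sum _
          (fun z _ => (integrable_exp_linear_sub_sq _).const_mul _)).symm
    _ ≤ (Real.sqrt π)⁻¹ * ∫ x : ℝ, Real.exp (-(5/9 : ℝ) * x ^ 2) := by
        refine mul_le_mul_of_nonneg_left ?_ (by positivity)
        refine integral_mono
          (integrable_finset_sum _
            (fun z _ => (integrable_exp_linear_sub_sq _).const_mul _))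
          (integrable_exp_neg_mul_sq (by norm_num : (0:ℝ) < 5/9)) ?_
        intro x
        have hsum := mgf_sum hk hkd hμ v B hv (2 * x / τ)
        calc ∑ z : ↥(SparseZ d k),
              ((d.choose k : ℝ)⁻¹ *
                ∏ j ∈ sparseSupport z.1, (1 + (d : ℝ) / k * μ j * z.1 j) / 2) *
                Real.exp ((2 * sparsePhi d k μ v z / τ) * x - x ^ 2)
            = (∑ z : ↥(SparseZ d k),
                ((d.choose k : ℝ)⁻¹ *
                  ∏ j ∈ sparseSupport z.1, (1 + (d : ℝ) / k * μ j * z.1 j) / 2) *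
                  Real.exp ((2 * x / τ) * sparsePhi d k μ v z)) * Real.exp (-x ^ 2) := by
              rw [Finset.sum_mul]
              refine Finset.sum_congr rfl fun z _ => ?_
              conv_rhs => rw [mul_assoc, ← Real.exp_add]
              congr 2
              ring
          _ ≤ Real.exp (4 * k * (2 * x / τ) ^ 2 * B ^ 2) * Real.exp (-x ^ 2) :=
              mul_le_mul_of_nonneg_right hsum (Real.exp_pos _).le
          _ = Real.exp (-(5/9 : ℝ) * x ^ 2) := by
              rw [← Real.exp_add]
              congr 1
              rw [div_pow, hτsq]
              field_simp
              ring
    _ ≤ 2 := by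
        rw [integral_gaussian]
        have h1 : π / (5/9 : ℝ) ≤ 4 * π := by nlinarith [Real.pi_pos]
        have h2 : Real.sqrt (π / (5/9 : ℝ)) ≤ Real.sqrt (4 * π) := Real.sqrt_le_sqrt h1
        have h3 : Real.sqrt (4 * π) = 2 * Real.sqrt π := by
          rw [show (4:ℝ) * π = 2 ^ 2 * π by ring, Real.sqrt_mul (by norm_num) π,
            Real.sqrt_sq (by norm_num)]
        have hπ : 0 < Real.sqrt π := Real.sqrt_pos.mpr Real.pi_pos
        calc (Real.sqrt π)⁻¹ * Real.sqrt (π / (5/9 : ℝ))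
            ≤ (Real.sqrt π)⁻¹ * (2 * Real.sqrt π) :=
              mul_le_mul_of_nonneg_left (h2.trans_eq h3) (by positivity)
          _ = 2 := by field_simp

lemma sparsePhi_sub {d k : ℕ} {μ : Fin d → ℝ} (θ θ' : Fin d → ℝ) (z : ↥(SparseZ d k)) :
    sparsePhi d k μ θ z - sparsePhi d k μ θ' z = sparsePhi d k μ (θ - θ') z := by
  simp only [Trace.sparsePhi, ← Finset.sum_sub_distrib]
  exact Finset.sum_congr rfl fun j _ => by simp only [Pi.sub_apply]; ring

lemma subgNorm_le_of {Ω : Type*} [MeasurableSpace Ω] (μm : Measure Ω) (X : Ω → ℝ) {t0 : ℝ}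
    (ht0 : 0 < t0) (h : ∫ ω, Real.exp (X ω ^ 2 / t0 ^ 2) ∂μm ≤ 2) :
    Trace.subgNorm μm X ≤ t0 :=
  csInf_le ⟨0, fun _ ht => ht.1.le⟩ ⟨ht0, h⟩

lemma subg_main {d k : ℕ} {μ : Fin d → ℝ} (hk : 1 ≤ k) (hkd : k ≤ d)
    (hμ : ∀ j, |μ j| ≤ (k : ℝ) / d) (p : ℝ) (v : Fin d → ℝ) (B : ℝ) (hB : 0 < B)
    (hv : ∀ j, |v j| ≤ B) (f : ↥(SparseZ d k) → ℝ)
    (hf : ∀ z, f z = (d : ℝ) ^ ((1:ℝ)/p) / Real.sqrt k * sparsePhi d k μ v z) :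
    Trace.subgNorm (sparseDist d k μ) f ≤ 6 * (d : ℝ) ^ ((1:ℝ)/p) * B := by
  haveI : Fintype ↥(SparseZ d k) := (sparseZ_finite d k).fintype
  have hd : 1 ≤ d := hk.trans hkd
  have hd0 : (0:ℝ) < d := by exact_mod_cast hd
  have hk0 : (0:ℝ) < k := by exact_mod_cast hk
  have hsk : (0:ℝ) < Real.sqrt k := Real.sqrt_pos.mpr hk0
  have hdp : (0:ℝ) < (d : ℝ) ^ ((1:ℝ)/p) := Real.rpow_pos_of_pos hd0 _
  refine subgNorm_le_of _ _ (by positivity) ?_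
  have hpt : ∀ z : ↥(SparseZ d k),
      Real.exp (f z ^ 2 / (6 * (d : ℝ) ^ ((1:ℝ)/p) * B) ^ 2)
        = Real.exp ((sparsePhi d k μ v z) ^ 2 / (36 * (k : ℝ) * B ^ 2)) := by
    intro z
    congr 1
    rw [hf z]
    have hks : Real.sqrt k ^ 2 = (k : ℝ) := Real.sq_sqrt hk0.le
    rw [mul_pow, div_pow, mul_pow, mul_pow, hks]
    field_simp
    ring
  simp only [hpt]
  exact key_integral hk hkd hμ v B hB hv

end SubgTracerAux

open MeasureTheory ProbabilityTheory in
/-- Lemma `lemma:lp-subg-tracer`: the fingerprinting score induces a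
`C`-subgaussian process w.r.t. the Minkowski norm of `Θ = B_∞(d^{-1/p})`. -/
theorem sparsePhi_subgaussian_process :
    ∃ C > (0 : ℝ),
      ∀ (d k : ℕ), 1 ≤ k → k ≤ d →
        ∀ p : ℝ, 1 ≤ p →
          ∀ μ : Fin d → ℝ, (∀ j, |μ j| ≤ (k : ℝ) / d) →
            Trace.IsSubgaussianProcess (Trace.sparseDist d k μ)
              {θ : Fin d → ℝ | ∀ i, |θ i| ≤ (d : ℝ) ^ (-(1 : ℝ) / p)}
              (Trace.minkowskiNorm {θ : Fin d → ℝ | ∀ i, |θ i| ≤ (d : ℝ) ^ (-(1 : ℝ) / p)})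
              (fun θ z => (d : ℝ) ^ ((1 : ℝ) / p) / Real.sqrt k *
                Trace.sparsePhi d k μ θ z) C := by
  refine ⟨6, by norm_num, ?_⟩
  intro d k hk hkd p hp μ hμ
  have hd : 1 ≤ d := hk.trans hkd
  have hd0 : (0:ℝ) < d := by exact_mod_cast hd
  haveI : Nonempty (Fin d) := ⟨⟨0, by omega⟩⟩
  set r : ℝ := (d:ℝ) ^ (-(1:ℝ)/p) with hr_def
  have hr : 0 < r := Real.rpow_pos_of_pos hd0 _
  have hdp : (0:ℝ) < (d:ℝ) ^ ((1:ℝ)/p) := Real.rpow_pos_of_pos hd0 _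
  have hrdp : r = ((d:ℝ) ^ ((1:ℝ)/p))⁻¹ := by
    rw [hr_def, neg_div, Real.rpow_neg hd0.le]
  have hT : {θ : Fin d → ℝ | ∀ i, |θ i| ≤ r} = Metric.closedBall 0 r := by
    ext θ
    simp only [Set.mem_setOf_eq, Metric.mem_closedBall, dist_zero_right]
    rw [pi_norm_le_iff_of_nonneg hr.le]
    simp [Real.norm_eq_abs]
  have hNeq : ∀ x : Fin d → ℝ,
      Trace.minkowskiNorm {θ : Fin d → ℝ | ∀ i, |θ i| ≤ r} x = ‖x‖ / r := by
    intro x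
    have himg : (fun y : Fin d → ℝ => -y) '' {θ : Fin d → ℝ | ∀ i, |θ i| ≤ r}
        = {θ : Fin d → ℝ | ∀ i, |θ i| ≤ r} := by
      ext y
      constructor
      · rintro ⟨w, hw, rfl⟩ i
        simpa using hw i
      · intro hy
        exact ⟨-y, fun i => by simpa using hy i, by simp⟩
    simp only [Trace.minkowskiNorm]
    rw [himg, Set.union_self, (Trace.convex_linftyBall r).convexHull_eq, hT,
      gauge_closedBall hr.le]
  constructor
  · -- increments
    intro θ hθ θ' hθ'
    rcases eq_or_ne (θ - θ') 0 with hv0 | hv0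
    · refine _root_.le_of_forall_pos_le_add fun ε hε => ?_
      have hB : (0:ℝ) < (6 * (d:ℝ) ^ ((1:ℝ)/p))⁻¹ * ε := by positivity
      have h := SubgTracerAux.subg_main hk hkd hμ p 0 _ hB
        (fun j => by simpa using hB.le) _ (fun z => by
          show (d:ℝ) ^ ((1:ℝ)/p) / Real.sqrt k * Trace.sparsePhi d k μ θ z
              - (d:ℝ) ^ ((1:ℝ)/p) / Real.sqrt k * Trace.sparsePhi d k μ θ' z
            = (d:ℝ) ^ ((1:ℝ)/p) / Real.sqrt k * Trace.sparsePhi d k μ 0 z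
          rw [← mul_sub, SubgTracerAux.sparsePhi_sub, hv0])
      have heq : 6 * (d:ℝ) ^ ((1:ℝ)/p) * ((6 * (d:ℝ) ^ ((1:ℝ)/p))⁻¹ * ε) = ε := by
        field_simp
      rw [heq] at h
      rw [hNeq, hv0]
      simp only [norm_zero, zero_div, mul_zero, zero_add]
      exact h
    · have hB : (0:ℝ) < ‖θ - θ'‖ := norm_pos_iff.mpr hv0
      have h := SubgTracerAux.subg_main hk hkd hμ p (θ - θ') _ hB
        (fun j => by simpa [Real.norm_eq_abs] using norm_le_pi_norm (θ - θ') j)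
        _ (fun z => by
          show (d:ℝ) ^ ((1:ℝ)/p) / Real.sqrt k * Trace.sparsePhi d k μ θ z
              - (d:ℝ) ^ ((1:ℝ)/p) / Real.sqrt k * Trace.sparsePhi d k μ θ' z
            = (d:ℝ) ^ ((1:ℝ)/p) / Real.sqrt k * Trace.sparsePhi d k μ (θ - θ') z
          rw [← mul_sub, SubgTracerAux.sparsePhi_sub])
      refine h.trans ?_
      rw [hNeq, hrdp, div_inv_eq_mul]
      exact le_of_eq (by ring)
  · -- diameter bound
    intro θ hθ
    have h := SubgTracerAux.subg_main hk hkd hμ p θ r hr (fun j => hθ j) _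
      (fun z => rfl)
    refine h.trans ?_
    have hval : 6 * (d:ℝ) ^ ((1:ℝ)/p) * r = 6 := by
      rw [hrdp]
      field_simp
    rw [hval]
    -- lower bound the diameter by 2
    have hmemx0 : (fun _ : Fin d => r) ∈ {θ : Fin d → ℝ | ∀ i, |θ i| ≤ r} := fun i => by
      rw [abs_of_nonneg hr.le]
    have hmemy0 : (fun _ : Fin d => -r) ∈ {θ : Fin d → ℝ | ∀ i, |θ i| ≤ r} := fun i => by
      rw [abs_neg, abs_of_nonneg hr.le]
    haveI : Nonempty ↥{θ : Fin d → ℝ | ∀ i, |θ i| ≤ r} := ⟨⟨_, hmemx0⟩⟩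
    have hub : ∀ x y : ↥{θ : Fin d → ℝ | ∀ i, |θ i| ≤ r},
        Trace.minkowskiNorm {θ : Fin d → ℝ | ∀ i, |θ i| ≤ r} (x.1 - y.1) ≤ 2 := by
      intro x y
      rw [hNeq, div_le_iff₀ hr]
      have hx : ‖x.1‖ ≤ r := (pi_norm_le_iff_of_nonneg hr.le).mpr fun i => by
        rw [Real.norm_eq_abs]; exact x.2 i
      have hy : ‖y.1‖ ≤ r := (pi_norm_le_iff_of_nonneg hr.le).mpr fun i => by
        rw [Real.norm_eq_abs]; exact y.2 i
      calc ‖x.1 - y.1‖ ≤ ‖x.1‖ + ‖y.1‖ := norm_sub_le _ _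
        _ ≤ 2 * r := by linarith
    have hval2 : Trace.minkowskiNorm {θ : Fin d → ℝ | ∀ i, |θ i| ≤ r}
        ((fun _ : Fin d => r) - fun _ : Fin d => -r) = 2 := by
      rw [hNeq]
      have hfun : ((fun _ : Fin d => r) - fun _ : Fin d => -r) = fun _ : Fin d => 2 * r := by
        funext i
        simp only [Pi.sub_apply]
        ring
      rw [hfun, pi_norm_const, Real.norm_eq_abs, abs_of_nonneg (by positivity : (0:ℝ) ≤ 2 * r)]
      field_simp
    have hdiam : 2 ≤ Trace.normDiam
        (Trace.minkowskiNorm {θ : Fin d → ℝ | ∀ i, |θ i| ≤ r})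
        {θ : Fin d → ℝ | ∀ i, |θ i| ≤ r} := by
      simp only [Trace.normDiam]
      have hbdd1 : BddAbove (Set.range fun y : ↥{θ : Fin d → ℝ | ∀ i, |θ i| ≤ r} =>
          Trace.minkowskiNorm {θ : Fin d → ℝ | ∀ i, |θ i| ≤ r} ((fun _ : Fin d => r) - y.1)) :=
        ⟨2, by rintro _ ⟨y, rfl⟩; exact hub ⟨_, hmemx0⟩ y⟩
      have h1 : (2:ℝ) ≤ ⨆ y : ↥{θ : Fin d → ℝ | ∀ i, |θ i| ≤ r},
          Trace.minkowskiNorm {θ : Fin d → ℝ | ∀ i, |θ i| ≤ r} ((fun _ : Fin d => r) - y.1) :=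
        le_ciSup_of_le hbdd1 ⟨_, hmemy0⟩ (le_of_eq hval2.symm)
      have hbdd2 : BddAbove (Set.range fun x : ↥{θ : Fin d → ℝ | ∀ i, |θ i| ≤ r} =>
          ⨆ y : ↥{θ : Fin d → ℝ | ∀ i, |θ i| ≤ r},
            Trace.minkowskiNorm {θ : Fin d → ℝ | ∀ i, |θ i| ≤ r} (x.1 - y.1)) :=
        ⟨2, by rintro _ ⟨x, rfl⟩; exact ciSup_le (fun y => hub x y)⟩
      exact h1.trans (le_ciSup hbdd2 ⟨_, hmemx0⟩)
    linarith
end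
end

section
/- Fix n ∈ ℕ, ε > 0 and δ ∈ [0,1). Let A_n be a learning algorithm that is (ε,δ)-differentially private. Then, if A_n is (ξ,m)-traceable, it holds that m ≤ n·exp(ε)·ξ + n·δ. -/
open MeasureTheory ProbabilityTheory

noncomputable section

open MeasureTheory ProbabilityTheory in
/-- Proposition `prop:dp-no-traceable`: differentially private
algorithms are not traceable. -/
theorem dp_implies_not_traceable (Z : Type) [MeasurableSpace Z] (d n : ℕ)
    (ε δ : ℝ) (hε : 0 < ε) (hδ0 : 0 ≤ δ) (hδ1 : δ < 1)
    (K : Kernel (Fin n → Z) (Fin d → ℝ)) (hK : IsMarkovKernel K)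
    (hDP : Trace.IsDP K ε δ) (ξ m : ℝ) (hT : Trace.IsTraceable K ξ m) :
    m ≤ n * Real.exp ε * ξ + n * δ := by
  classical
  obtain ⟨φ, D, lam, hD, hφ, hsound, hrecall⟩ := hT
  haveI := hD
  haveI := hK
  set ν : Measure (Fin (n+1) → Z) := Measure.pi fun _ => D with hν
  haveI : IsProbabilityMeasure ν := by rw [hν]; infer_instance
  have htail : Measurable (fun zs : Fin (n+1) → Z => fun j : Fin n => zs j.succ) :=
    measurable_pi_lambda _ fun j => measurable_pi_apply _
  set K' : Kernel (Fin (n+1) → Z) (Fin d → ℝ) := K.comap (fun zs j => zs j.succ) htail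
    with hK'def
  haveI : IsMarkovKernel K' := Kernel.IsMarkovKernel.comap K htail
  -- the measure-valued map is measurable
  have hmm : Measurable (fun zs : Fin (n+1) → Z => (K' zs).map (Prod.mk zs)) := by
    apply Measure.measurable_of_measurable_coe
    intro s hs
    simp_rw [Measure.map_apply measurable_prodMk_left hs]
    exact Kernel.measurable_kernel_prodMk_left hs
  have hbind : ∀ s : Set ((Fin (n+1) → Z) × (Fin d → ℝ)), MeasurableSet s →
      Trace.traceMeasure D K s = ∫⁻ zs, K' zs (Prod.mk zs ⁻¹' s) ∂ν := by
    intro s hs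
    have heq : Trace.traceMeasure D K = ν.bind fun zs => (K' zs).map (Prod.mk zs) := rfl
    rw [heq, Measure.bind_apply hs hmm.aemeasurable]
    exact lintegral_congr fun zs => Measure.map_apply measurable_prodMk_left hs
  -- the trace measure is a probability measure
  haveI hP : IsProbabilityMeasure (Trace.traceMeasure D K) := by
    constructor
    rw [hbind _ MeasurableSet.univ]
    simp
  -- measurable sets
  set Mset : Fin (n+1) → Set ((Fin (n+1) → Z) × (Fin d → ℝ)) :=
    fun j => {x | lam ≤ φ x.2 (x.1 j)} with hMsetdef
  have hTmeas : MeasurableSet {q : (Fin d → ℝ) × Z | lam ≤ Function.uncurry φ q} :=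
    measurableSet_le measurable_const hφ
  have hMset : ∀ j, MeasurableSet (Mset j) := fun j =>
    hTmeas.preimage (measurable_snd.prodMk ((measurable_pi_apply j).comp measurable_fst))
  have hSmeas : ∀ z : Z, MeasurableSet {θ : Fin d → ℝ | lam ≤ φ θ z} := fun z =>
    hTmeas.preimage (measurable_id.prodMk measurable_const)
  -- key inequality
  have key : ∀ i : Fin n, Trace.traceMeasure D K (Mset i.succ)
      ≤ ENNReal.ofReal (Real.exp ε) * Trace.traceMeasure D K (Mset 0) + ENNReal.ofReal δ := by
    intro i
    set σ : Equiv.Perm (Fin (n+1)) := Equiv.swap 0 i.succ with hσ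
    have hmp : MeasurePreserving (fun zs : Fin (n+1) → Z => fun b => zs (σ b)) ν ν := by
      have h := measurePreserving_piCongrLeft (fun _ : Fin (n+1) => D) σ
      have heq : ⇑(MeasurableEquiv.piCongrLeft (fun _ : Fin (n+1) => Z) σ)
          = fun zs => fun b => zs (σ.symm b) := by
        funext zs b
        have h2 := MeasurableEquiv.piCongrLeft_apply_apply σ (β := fun _ : Fin (n+1) => Z)
          zs (σ.symm b)
        simpa using h2
      rw [heq] at h
      have hsymm : σ.symm = σ := Equiv.symm_swap 0 i.succ
      rw [hsymm] at h
      exact h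
    set g₁ : (Fin (n+1) → Z) → ENNReal := fun zs => K' zs (Prod.mk zs ⁻¹' Mset i.succ) with hg₁def
    have hg₁ : Measurable g₁ := Kernel.measurable_kernel_prodMk_left (hMset i.succ)
    have hg₀ : Measurable (fun zs : Fin (n+1) → Z =>
        K (fun j : Fin n => zs j.succ) {θ | lam ≤ φ θ (zs 0)}) :=
      Kernel.measurable_kernel_prodMk_left (κ := K') (hMset 0)
    have hA : Trace.traceMeasure D K (Mset i.succ) = ∫⁻ zs, g₁ (fun b => zs (σ b)) ∂ν := by
      rw [hbind _ (hMset i.succ)]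
      exact (hmp.lintegral_comp hg₁).symm
    have hB : Trace.traceMeasure D K (Mset 0)
        = ∫⁻ zs, K (fun j : Fin n => zs j.succ) {θ | lam ≤ φ θ (zs 0)} ∂ν := by
      rw [hbind _ (hMset 0)]
      rfl
    have h0 : σ i.succ = 0 := Equiv.swap_apply_right 0 i.succ
    have hpt : ∀ zs : Fin (n+1) → Z,
        K (fun j : Fin n => zs (σ j.succ)) {θ | lam ≤ φ θ (zs 0)}
          ≤ ENNReal.ofReal (Real.exp ε)
              * K (fun j : Fin n => zs j.succ) {θ | lam ≤ φ θ (zs 0)}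
            + ENNReal.ofReal δ := by
      intro zs
      have hadj : ∃ j, ∀ k, k ≠ j →
          (fun j : Fin n => zs (σ j.succ)) k = (fun j : Fin n => zs j.succ) k := by
        refine ⟨i, fun k hk => ?_⟩
        have : σ k.succ = k.succ :=
          Equiv.swap_apply_of_ne_of_ne (Fin.succ_ne_zero k)
            (fun h => hk (Fin.succ_injective _ h))
        simp [this]
      have hdp := hDP _ _ hadj _ (hSmeas (zs 0))
      have h1 : K (fun j : Fin n => zs (σ j.succ)) {θ | lam ≤ φ θ (zs 0)} ≠ ⊤ :=
        measure_ne_top _ _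
      have h2 : K (fun j : Fin n => zs j.succ) {θ | lam ≤ φ θ (zs 0)} ≠ ⊤ :=
        measure_ne_top _ _
      calc K (fun j : Fin n => zs (σ j.succ)) {θ | lam ≤ φ θ (zs 0)}
          = ENNReal.ofReal ((K (fun j : Fin n => zs (σ j.succ))
              {θ | lam ≤ φ θ (zs 0)}).toReal) := (ENNReal.ofReal_toReal h1).symm
        _ ≤ ENNReal.ofReal (Real.exp ε
              * (K (fun j : Fin n => zs j.succ) {θ | lam ≤ φ θ (zs 0)}).toReal + δ) :=
            ENNReal.ofReal_le_ofReal hdp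
        _ = ENNReal.ofReal (Real.exp ε)
              * K (fun j : Fin n => zs j.succ) {θ | lam ≤ φ θ (zs 0)}
            + ENNReal.ofReal δ := by
            rw [ENNReal.ofReal_add (mul_nonneg (Real.exp_pos ε).le ENNReal.toReal_nonneg) hδ0,
              ENNReal.ofReal_mul (Real.exp_pos ε).le, ENNReal.ofReal_toReal h2]
    calc Trace.traceMeasure D K (Mset i.succ)
        = ∫⁻ zs, g₁ (fun b => zs (σ b)) ∂ν := hA
      _ = ∫⁻ zs, K (fun j : Fin n => zs (σ j.succ)) {θ | lam ≤ φ θ (zs 0)} ∂ν := by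
          refine lintegral_congr fun zs => ?_
          show K' (fun b => zs (σ b)) {θ | lam ≤ φ θ (zs (σ i.succ))} = _
          rw [h0]
          rfl
      _ ≤ ∫⁻ zs, (ENNReal.ofReal (Real.exp ε)
            * K (fun j : Fin n => zs j.succ) {θ | lam ≤ φ θ (zs 0)}
            + ENNReal.ofReal δ) ∂ν := lintegral_mono hpt
      _ = ENNReal.ofReal (Real.exp ε) * Trace.traceMeasure D K (Mset 0)
            + ENNReal.ofReal δ := by
          rw [lintegral_add_right _ measurable_const, lintegral_const, measure_univ, mul_one,
            lintegral_const_mul _ hg₀, hB]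
  -- real-valued key inequality
  have keyR : ∀ i : Fin n,
      (Trace.traceMeasure D K (Mset i.succ)).toReal ≤ Real.exp ε * ξ + δ := by
    intro i
    have hfin : ENNReal.ofReal (Real.exp ε) * Trace.traceMeasure D K (Mset 0)
        + ENNReal.ofReal δ ≠ ⊤ :=
      ENNReal.add_ne_top.mpr
        ⟨ENNReal.mul_ne_top ENNReal.ofReal_ne_top (measure_ne_top _ _), ENNReal.ofReal_ne_top⟩
    have h := ENNReal.toReal_mono hfin (key i)
    rw [ENNReal.toReal_add (ENNReal.mul_ne_top ENNReal.ofReal_ne_top (measure_ne_top _ _))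
        ENNReal.ofReal_ne_top, ENNReal.toReal_mul, ENNReal.toReal_ofReal (Real.exp_pos ε).le,
      ENNReal.toReal_ofReal hδ0] at h
    refine h.trans ?_
    have hs : (Trace.traceMeasure D K (Mset 0)).toReal ≤ ξ := hsound
    gcongr
  -- compute the recall integral
  have hcardint : (∫ x, ((Finset.univ.filter
        fun i : Fin n => lam ≤ φ x.2 (x.1 i.succ)).card : ℝ) ∂Trace.traceMeasure D K)
      = ∑ i : Fin n, (Trace.traceMeasure D K (Mset i.succ)).toReal := by
    have hrw : ∀ x : (Fin (n+1) → Z) × (Fin d → ℝ),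
        ((Finset.univ.filter fun i : Fin n => lam ≤ φ x.2 (x.1 i.succ)).card : ℝ)
          = ∑ i : Fin n, Set.indicator (Mset i.succ) (fun _ => (1:ℝ)) x := by
      intro x
      rw [Finset.card_filter]
      push_cast
      refine Finset.sum_congr rfl fun i _ => ?_
      by_cases h : lam ≤ φ x.2 (x.1 i.succ)
      · rw [if_pos h, Set.indicator_of_mem (show x ∈ Mset i.succ from h)]
      · rw [if_neg h, Set.indicator_of_notMem (show x ∉ Mset i.succ from h)]
    simp_rw [hrw]
    rw [integral_finset_sum _ (fun i _ => (integrable_const (1:ℝ)).indicator (hMset i.succ))]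
    refine Finset.sum_congr rfl fun i _ => ?_
    rw [integral_indicator_const _ (hMset i.succ), smul_eq_mul, mul_one]
    rfl
  -- conclude
  calc m ≤ _ := hrecall
    _ = ∑ i : Fin n, (Trace.traceMeasure D K (Mset i.succ)).toReal := hcardint
    _ ≤ ∑ _i : Fin n, (Real.exp ε * ξ + δ) := Finset.sum_le_sum fun i _ => keyR i
    _ = n * Real.exp ε * ξ + n * δ := by
        rw [Finset.sum_const, Finset.card_univ, Fintype.card_fin, nsmul_eq_mul]
        ring
end
end
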